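/- arXiv:2604.06976 — 5 statements merged into one kernel-verified Lean document; each statement's English description precedes it below -/
import Mathlib

section
/- Additive drift theorem: Let (X_t)_{t∈ℕ} be an integrable stochastic process over ℝ and let T = inf{t ∈ ℕ : X_t = 0}. Assume: (NN) for all t, on the event {t ≤ T}, X_t ≥ 0 almost surely; and (D) there is δ > 0 such that for all t, on the event {t < T}, E[X_t − X_{t+1} | X_0, …, X_t] ≥ δ almost surely. Then E[T] ≤ E[X_0]/δ. -/
open MeasureTheory ENNReal
open scoped BigOperators

/-- **Additive drift theorem.**
`(X t)` is an integrable real-valued process,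
`T ω = inf {t : ℕ | X t ω = 0}` (with value `⊤ = ∞` if `0` is never hit).
Assume (NN): on the event `{t ≤ T}`, `X t ≥ 0` a.s., and (D): there is `δ > 0` such that
on the event `{t < T}`, `E[X t − X (t+1) | X 0, …, X t] ≥ δ` a.s.
Then `E[T] ≤ E[X 0] / δ`. -/
theorem additive_drift
    {Ω : Type*} [MeasurableSpace Ω] (μ : Measure Ω) [IsProbabilityMeasure μ]
    (X : ℕ → Ω → ℝ)
    (hmeas : ∀ t, Measurable (X t))
    (hint : ∀ t, Integrable (X t) μ)
    (T : Ω → ℝ≥0∞)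
    (hT : ∀ ω, T ω = ⨅ (t : ℕ) (_ : X t ω = 0), (t : ℝ≥0∞))
    (hNN : ∀ t : ℕ, ∀ᵐ ω ∂μ, (t : ℝ≥0∞) ≤ T ω → 0 ≤ X t ω)
    (δ : ℝ) (hδ : 0 < δ)
    (hdrift : ∀ t : ℕ, ∀ᵐ ω ∂μ, (t : ℝ≥0∞) < T ω →
      δ ≤
        (μ[(X t - X (t + 1)) |
          MeasurableSpace.comap (fun ω (i : Fin (t + 1)) => X i ω) inferInstance]) ω) :
    ∫⁻ ω, T ω ∂μ ≤ ENNReal.ofReal ((∫ ω, X 0 ω ∂μ) / δ) := by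
  classical
  set A : ℕ → Set Ω := fun t => {ω | ∀ s ≤ t, X s ω ≠ 0} with hA
  -- measurability of the events
  have hAmeas : ∀ t, MeasurableSet (A t) := by
    intro t
    have hEq : A t = ⋂ s ∈ Finset.range (t + 1), (X s) ⁻¹' ({0}ᶜ) := by
      ext ω
      simp [hA, Nat.lt_succ_iff]
    rw [hEq]
    exact MeasurableSet.biInter (Set.to_countable _)
      (fun s _ => (hmeas s) (measurableSet_singleton 0).compl)
  -- characterization of the events via T
  have h1 : ∀ t ω, ω ∈ A t → ((t + 1 : ℕ) : ℝ≥0∞) ≤ T ω := by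
    intro t ω h
    rw [hT]
    refine le_iInf fun s => le_iInf fun hs => ?_
    have hle : t + 1 ≤ s := by
      by_contra hc
      exact h s (by omega) hs
    exact_mod_cast hle
  have h2 : ∀ (t : ℕ) (ω : Ω), (t : ℝ≥0∞) < T ω → ω ∈ A t := by
    intro t ω h s hs hXs
    have hle : T ω ≤ (s : ℝ≥0∞) := by
      rw [hT]; exact iInf_le_of_le s (iInf_le _ hXs)
    have hle' : T ω ≤ (t : ℝ≥0∞) := hle.trans (by exact_mod_cast hs)
    exact absurd h (not_lt.mpr hle')
  have hmemA : ∀ t ω, ω ∈ A t ↔ (t : ℝ≥0∞) < T ω := by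
    intro t ω
    constructor
    · intro h
      exact lt_of_lt_of_le (by exact_mod_cast Nat.lt_succ_self t) (h1 t ω h)
    · exact h2 t ω
  -- T as a sum of indicators
  have hTsum : ∀ ω, T ω = ∑' t : ℕ, (A t).indicator (fun _ => (1 : ℝ≥0∞)) ω := by
    intro ω
    by_cases h : ∃ s, X s ω = 0
    · set n := Nat.find h with hn
      have hTn : T ω = (n : ℝ≥0∞) := by
        apply le_antisymm
        · rw [hT]; exact iInf_le_of_le n (iInf_le _ (Nat.find_spec h))
        · rw [hT]
          refine le_iInf fun s => le_iInf fun hs => ?_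
          exact_mod_cast Nat.find_min' h hs
      have hind : ∀ t, (A t).indicator (fun _ => (1 : ℝ≥0∞)) ω
          = if t < n then 1 else 0 := by
        intro t
        by_cases hm : ω ∈ A t
        · have hlt : (t : ℝ≥0∞) < (n : ℝ≥0∞) := hTn ▸ (hmemA t ω).mp hm
          have : t < n := by exact_mod_cast hlt
          simp [Set.indicator_of_mem hm, this]
        · have : ¬ t < n := by
            intro hc
            exact hm ((hmemA t ω).mpr (hTn ▸ (by exact_mod_cast hc : (t : ℝ≥0∞) < (n : ℝ≥0∞))))
          simp [Set.indicator_of_notMem hm, this]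
      rw [hTn]
      simp_rw [hind]
      rw [tsum_eq_sum (s := Finset.range n) (by intro t ht; simp at ht; simp [Nat.not_lt.mpr ht])]
      rw [Finset.sum_congr rfl (fun t ht => if_pos (Finset.mem_range.mp ht))]
      simp
    · have hTtop : T ω = ⊤ := by
        rw [hT]
        simp only [iInf_eq_top]
        intro t ht
        exact absurd ⟨t, ht⟩ h
      have hmem : ∀ t, ω ∈ A t := by
        intro t s _ hs
        exact h ⟨s, hs⟩
      rw [hTtop]
      have : ∀ t : ℕ, (A t).indicator (fun _ => (1 : ℝ≥0∞)) ω = 1 := fun t =>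
        Set.indicator_of_mem (hmem t) _
      simp_rw [this]
      exact (ENNReal.tsum_const_eq_top_of_ne_zero one_ne_zero).symm
  -- integral of T
  have hlin : ∫⁻ ω, T ω ∂μ = ∑' t, μ (A t) := by
    calc ∫⁻ ω, T ω ∂μ
        = ∫⁻ ω, ∑' t : ℕ, (A t).indicator (fun _ => (1 : ℝ≥0∞)) ω ∂μ :=
          lintegral_congr hTsum
      _ = ∑' t : ℕ, ∫⁻ ω, (A t).indicator (fun _ => (1 : ℝ≥0∞)) ω ∂μ :=
          lintegral_tsum fun t => ((measurable_one.indicator (hAmeas t)).aemeasurable)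
      _ = ∑' t : ℕ, μ (A t) := by
          simp [lintegral_indicator, hAmeas]
  -- the filtration
  have hFle : ∀ t : ℕ,
      (MeasurableSpace.comap (fun ω (i : Fin (t + 1)) => X i ω) inferInstance)
        ≤ (inferInstance : MeasurableSpace Ω) := fun t =>
    (measurable_pi_lambda (fun ω (i : Fin (t + 1)) => X i ω) fun i => hmeas i).comap_le
  -- A t is measurable w.r.t. the filtration at time t
  have hAF : ∀ t : ℕ,
      MeasurableSet[MeasurableSpace.comap (fun ω (i : Fin (t + 1)) => X i ω) inferInstance]
        (A t) := by
    intro t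
    refine ⟨{f : Fin (t + 1) → ℝ | ∀ i, f i ≠ 0}, ?_, ?_⟩
    · have hEq : {f : Fin (t + 1) → ℝ | ∀ i, f i ≠ 0}
          = ⋂ i : Fin (t + 1), (fun f => f i) ⁻¹' ({0}ᶜ) := by
        ext f; simp
      rw [hEq]
      exact MeasurableSet.iInter fun i =>
        (measurable_pi_apply i) (measurableSet_singleton 0).compl
    · ext ω
      simp only [Set.mem_preimage, Set.mem_setOf_eq, hA]
      constructor
      · intro h s hs
        exact h ⟨s, Nat.lt_succ_of_le hs⟩
      · intro h i
        exact h i (Nat.lt_succ_iff.mp i.isLt)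
  -- the truncated expectations
  set Y : ℕ → ℝ := fun t => ∫ ω in A t, X t ω ∂μ with hY
  have hAsubset : ∀ t, A (t + 1) ⊆ A t := by
    intro t ω h s hs
    exact h s (hs.trans (Nat.le_succ t))
  have hXnnA : ∀ t, 0 ≤ᵐ[μ.restrict (A t)] X t := by
    intro t
    refine (ae_restrict_iff' (hAmeas t)).mpr ?_
    filter_upwards [hNN t] with ω h hω
    exact h (le_of_lt ((hmemA t ω).mp hω))
  have hXnnA' : ∀ t, 0 ≤ᵐ[μ.restrict (A t)] X (t + 1) := by
    intro t
    refine (ae_restrict_iff' (hAmeas t)).mpr ?_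
    filter_upwards [hNN (t + 1)] with ω h hω
    exact h (by exact_mod_cast h1 t ω hω)
  have hYnn : ∀ t, 0 ≤ Y t := fun t => setIntegral_nonneg_of_ae_restrict (hXnnA t)
  -- the drift step
  have hstep : ∀ t, δ * (μ (A t)).toReal + Y (t + 1) ≤ Y t := by
    intro t
    haveI : SigmaFinite (μ.trim (hFle t)) := by infer_instance
    have hcond : ∫ ω in A t, (X t ω - X (t + 1) ω) ∂μ
        = ∫ ω in A t,
          (μ[(X t - X (t + 1)) |
            MeasurableSpace.comap (fun ω (i : Fin (t + 1)) => X i ω) inferInstance]) ω ∂μ := by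
      rw [setIntegral_condExp (hFle t) ((hint t).sub (hint (t + 1))) (hAF t)]
      rfl
    have hge : δ * (μ (A t)).toReal
        ≤ ∫ ω in A t,
          (μ[(X t - X (t + 1)) |
            MeasurableSpace.comap (fun ω (i : Fin (t + 1)) => X i ω) inferInstance]) ω ∂μ := by
      have hae : ∀ᵐ ω ∂(μ.restrict (A t)), δ ≤
          (μ[(X t - X (t + 1)) |
            MeasurableSpace.comap (fun ω (i : Fin (t + 1)) => X i ω) inferInstance]) ω := by
        refine (ae_restrict_iff' (hAmeas t)).mpr ?_
        filter_upwards [hdrift t] with ω h hω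
        exact h ((hmemA t ω).mp hω)
      calc δ * (μ (A t)).toReal = ∫ _ω in A t, δ ∂μ := by
            rw [setIntegral_const]; ring_nf; rfl
        _ ≤ _ := integral_mono_ae (integrable_const δ)
              integrable_condExp.integrableOn hae
    have hsplit : ∫ ω in A t, (X t ω - X (t + 1) ω) ∂μ
        = Y t - ∫ ω in A t, X (t + 1) ω ∂μ :=
      integral_sub ((hint t).integrableOn) ((hint (t + 1)).integrableOn)
    have hmono : Y (t + 1) ≤ ∫ ω in A t, X (t + 1) ω ∂μ :=
      setIntegral_mono_set ((hint (t + 1)).integrableOn) (hXnnA' t)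
        (HasSubset.Subset.eventuallyLE (hAsubset t))
    have := hcond ▸ hge
    linarith [hsplit ▸ this]
  -- Y 0 is the full expectation
  have hY0 : Y 0 = ∫ ω, X 0 ω ∂μ := by
    refine setIntegral_eq_integral_of_forall_compl_eq_zero ?_
    intro ω h
    by_contra hc
    exact h fun s hs => by
      interval_cases s
      exact hc
  -- partial sums bound
  have hsum : ∀ n, δ * ∑ t ∈ Finset.range n, (μ (A t)).toReal ≤ ∫ ω, X 0 ω ∂μ := by
    have key : ∀ n, δ * ∑ t ∈ Finset.range n, (μ (A t)).toReal + Y n ≤ Y 0 := by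
      intro n
      induction n with
      | zero => simp
      | succ n ih =>
          rw [Finset.sum_range_succ, mul_add]
          linarith [hstep n]
    intro n
    have := key n
    rw [hY0] at this
    linarith [hYnn n]
  -- conclusion
  rw [hlin, ENNReal.tsum_eq_iSup_nat]
  refine iSup_le fun n => ?_
  have hfin : ∀ t, μ (A t) ≠ ⊤ := fun t => measure_ne_top μ _
  have hofReal : ∑ t ∈ Finset.range n, μ (A t)
      = ENNReal.ofReal (∑ t ∈ Finset.range n, (μ (A t)).toReal) := by
    rw [ENNReal.ofReal_sum_of_nonneg fun _ _ => ENNReal.toReal_nonneg]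
    exact Finset.sum_congr rfl fun t _ => (ENNReal.ofReal_toReal (hfin t)).symm
  rw [hofReal]
  refine ENNReal.ofReal_le_ofReal ?_
  rw [le_div_iff₀ hδ]
  calc (∑ t ∈ Finset.range n, (μ (A t)).toReal) * δ
      = δ * ∑ t ∈ Finset.range n, (μ (A t)).toReal := mul_comm _ _
    _ ≤ _ := hsum n
end

section
/- Let n ∈ ℕ, let 0 < χ < 1/2, let k ∈ ℕ with 1 ≤ k ≤ n and k ≤ 1/χ, and for i ∈ {1,…,k} set w_i = 1 + (k+1−i)/k and g(x) = Σ_{i=1}^k w_i·(1 − x_i) for x ∈ {0,1}^n. Then for every current point x ∈ {0,1}^n with g(x) > 0, one step of the (1+1) EA with mutation rate χ on BinVal satisfies E[g(x) − g(x')] ≥ χ·g(x)/(4e), where x' is the next point and the expectation is over the random mutation. -/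
open scoped BigOperators

noncomputable section

/-- `BinVal` on bit strings of length `n`: index `0` (bit number `1`) is the most
significant bit, with weight `2 ^ (n - 1 - i)`. -/
def binVal (n : ℕ) (x : Fin n → Bool) : ℕ :=
  ∑ i : Fin n, if x i then 2 ^ (n - 1 - (i : ℕ)) else 0

/-- Probability that standard bit mutation with rate `χ` turns `x` into `y`:
each bit flips independently with probability `χ`. -/
def flipProb (n : ℕ) (χ : ℝ) (x y : Fin n → Bool) : ℝ :=
  ∏ i : Fin n, if x i = y i then 1 - χ else χ

/-- Elitist selection of the (1+1) EA on BinVal: the offspring `y` replaces `x`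
iff `BinVal y ≥ BinVal x`. -/
def select (n : ℕ) (x y : Fin n → Bool) : Fin n → Bool :=
  if binVal n x ≤ binVal n y then y else x

private lemma gauss_sum (m : ℕ) : (∑ i ∈ Finset.range m, (i : ℝ)) * 2 = (m : ℝ) * ((m : ℝ) - 1) := by
  induction m with
  | zero => simp
  | succ p ih =>
    rw [Finset.sum_range_succ, add_mul, ih]
    push_cast
    ring

private lemma geom_two (M : ℕ) : ∑ i ∈ Finset.range M, 2 ^ i = 2 ^ M - 1 := by
  induction M with
  | zero => simp
  | succ p ih =>
    rw [Finset.sum_range_succ, ih]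
    have : 1 ≤ 2 ^ p := Nat.one_le_two_pow
    omega

private lemma two_pow_tail_sum (n j : ℕ) (hj : j < n) :
    ∑ i ∈ Finset.range n, (if j < i then 2 ^ (n - 1 - i) else 0) = 2 ^ (n - 1 - j) - 1 := by
  rw [← Finset.sum_filter]
  have hset : (Finset.range n).filter (fun i => j < i) = Finset.Ico (j + 1) n := by
    ext i
    simp [Finset.mem_Ico, Finset.mem_filter, Finset.mem_range]
    omega
  rw [hset, Finset.sum_Ico_eq_sum_range]
  have hM : n - (j + 1) = n - 1 - j := by omega
  rw [hM]
  set M := n - 1 - j with hMdef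
  have hcong : ∀ i ∈ Finset.range M, 2 ^ (n - 1 - (j + 1 + i)) = 2 ^ (M - 1 - i) := by
    intro i hi
    simp only [Finset.mem_range] at hi
    congr 1
    omega
  rw [Finset.sum_congr rfl hcong, Finset.sum_range_reflect (fun i => 2 ^ i) M]
  exact geom_two M

private lemma binVal_lt_binVal (n : ℕ) (x y : Fin n → Bool) (j : Fin n)
    (hagree : ∀ i : Fin n, i < j → x i = y i) (hxj : x j = false) (hyj : y j = true) :
    binVal n x < binVal n y := by
  classical
  unfold binVal
  have hsplit : ∀ z : Fin n → Bool,
      (∑ i : Fin n, if z i then 2 ^ (n - 1 - (i : ℕ)) else 0)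
      = (∑ i ∈ Finset.univ.filter (fun i : Fin n => i < j), if z i then 2 ^ (n - 1 - (i : ℕ)) else 0)
        + ((if z j then 2 ^ (n - 1 - (j : ℕ)) else 0)
          + ∑ i ∈ Finset.univ.filter (fun i : Fin n => j < i), if z i then 2 ^ (n - 1 - (i : ℕ)) else 0) := by
    intro z
    rw [← Finset.sum_filter_add_sum_filter_not Finset.univ (fun i : Fin n => i < j)]
    congr 1
    have : Finset.univ.filter (fun i : Fin n => ¬ i < j)
        = insert j (Finset.univ.filter (fun i : Fin n => j < i)) := by
      ext i
      simp only [Finset.mem_filter, Finset.mem_univ, true_and, Finset.mem_insert, not_lt]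
      constructor
      · intro h
        rcases eq_or_lt_of_le h with h' | h'
        · left; exact (Fin.ext_iff.mpr (Fin.ext_iff.mp h'.symm)).symm ▸ h'.symm
        · right; exact h'
      · rintro (rfl | h)
        · exact le_refl _
        · exact le_of_lt h
    rw [this, Finset.sum_insert (by simp)]
  rw [hsplit x, hsplit y]
  have hL : (∑ i ∈ Finset.univ.filter (fun i : Fin n => i < j), if x i then 2 ^ (n - 1 - (i : ℕ)) else 0)
      = ∑ i ∈ Finset.univ.filter (fun i : Fin n => i < j), if y i then 2 ^ (n - 1 - (i : ℕ)) else 0 := by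
    apply Finset.sum_congr rfl
    intro i hi
    rw [hagree i (by simpa using hi)]
  rw [hL, hxj, hyj]
  have htail : (∑ i ∈ Finset.univ.filter (fun i : Fin n => j < i), if x i then 2 ^ (n - 1 - (i : ℕ)) else 0)
      ≤ 2 ^ (n - 1 - (j : ℕ)) - 1 := by
    calc (∑ i ∈ Finset.univ.filter (fun i : Fin n => j < i), if x i then 2 ^ (n - 1 - (i : ℕ)) else 0)
        ≤ ∑ i ∈ Finset.univ.filter (fun i : Fin n => j < i), 2 ^ (n - 1 - (i : ℕ)) := by
          apply Finset.sum_le_sum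
          intro i _
          split <;> simp
      _ = 2 ^ (n - 1 - (j : ℕ)) - 1 := by
          rw [← two_pow_tail_sum n j j.isLt]
          rw [← Fin.sum_univ_eq_sum_range (fun i => if (j : ℕ) < i then 2 ^ (n - 1 - i) else 0) n]
          rw [← Finset.sum_filter]
          apply Finset.sum_congr
          · apply Finset.filter_congr
            intro i _
            simp only [Fin.lt_def]
          · intros; rfl
  have hpos : 1 ≤ 2 ^ (n - 1 - (j : ℕ)) := Nat.one_le_two_pow
  have hRy : 0 ≤ ∑ i ∈ Finset.univ.filter (fun i : Fin n => j < i), if y i then 2 ^ (n - 1 - (i : ℕ)) else 0 :=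
    Nat.zero_le _
  norm_num
  omega

private lemma class_sum (n : ℕ) (χ : ℝ) (x : Fin n → Bool) (j i : Fin n) (u : Bool → ℝ) :
    ∑ y ∈ Fintype.piFinset (fun m : Fin n =>
        if m < j then {x m} else if m = j then {!(x m)} else (Finset.univ : Finset Bool)),
      flipProb n χ x y * u (y i)
    = (1 - χ) ^ (j : ℕ) * χ *
      (if i < j then u (x i) else if i = j then u (!(x j)) else
        ((if x i = true then 1 - χ else χ) * u true + (if x i = false then 1 - χ else χ) * u false)) := by
  classical
  set t : Fin n → Finset Bool := fun m =>
    if m < j then {x m} else if m = j then {!(x m)} else (Finset.univ : Finset Bool) with ht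
  set E : ℝ :=
      (if i < j then u (x i) else if i = j then u (!(x j)) else
        ((if x i = true then 1 - χ else χ) * u true + (if x i = false then 1 - χ else χ) * u false))
    with hE
  set F : Fin n → ℝ := fun m => if m < j then 1 - χ else if m = j then χ else 1 with hF
  have hsummand : ∀ y ∈ Fintype.piFinset t,
      flipProb n χ x y * u (y i)
      = ∏ m : Fin n, ((if x m = y m then 1 - χ else χ) * (if m = i then u (y m) else 1)) := by
    intro y _
    rw [Finset.prod_mul_distrib]
    unfold flipProb
    congr 1
    rw [Finset.prod_ite_eq' Finset.univ i (fun m => u (y m))]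
    simp
  rw [Finset.sum_congr rfl hsummand,
    ← Finset.prod_univ_sum t (fun m b => (if x m = b then 1 - χ else χ) * (if m = i then u b else 1))]
  have hfac : ∀ m : Fin n,
      (∑ b ∈ t m, (if x m = b then 1 - χ else χ) * (if m = i then u b else 1))
      = F m * (if m = i then E else 1) := by
    intro m
    by_cases hmi : m = i
    · subst hmi
      rcases lt_trichotomy m j with h | h | h
      · simp [ht, hF, hE, h]
      · subst h
        cases hxm : x m <;> simp [ht, hF, hE, lt_irrefl, hxm]
      · have h1 : ¬ m < j := not_lt_of_gt h
        have h2 : m ≠ j := ne_of_gt h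
        simp only [ht, hF, hE, if_neg h1, if_neg h2, if_pos rfl]
        rw [Fintype.sum_bool]
        norm_num
    · rcases lt_trichotomy m j with h | h | h
      · simp [ht, hF, hE, h, hmi]
      · subst h
        cases hxm : x m <;> simp [ht, hF, hE, lt_irrefl, hxm, hmi]
      · have h1 : ¬ m < j := not_lt_of_gt h
        have h2 : m ≠ j := ne_of_gt h
        simp only [ht, hF, hE, if_neg h1, if_neg h2, if_neg hmi, mul_one]
        rw [Fintype.sum_bool]
        cases hxm : x m <;> simp [hxm] <;> ring
  rw [Finset.prod_congr rfl (fun m _ => hfac m), Finset.prod_mul_distrib]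
  rw [Finset.prod_ite_eq' Finset.univ i (fun _ => E)]
  simp only [Finset.mem_univ, if_pos]
  have hprodF : (∏ m : Fin n, F m) = (1 - χ) ^ (j : ℕ) * χ := by
    rw [hF, Finset.prod_ite]
    have hcard : (Finset.univ.filter (fun m : Fin n => m < j)).card = (j : ℕ) := by
      have : Finset.univ.filter (fun m : Fin n => m < j) = Finset.Iio j := by
        ext m; simp [Finset.mem_Iio]
      rw [this, Fin.card_Iio]
    rw [Finset.prod_const, hcard]
    have : (∏ m ∈ Finset.univ.filter (fun m : Fin n => ¬ m < j), if m = j then χ else 1)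
        = if j = j then χ else 1 :=
      Finset.prod_eq_single_of_mem j (by simp) (fun b _ hbj => if_neg hbj)
    rw [this, if_pos rfl]
  rw [hprodF]

private lemma sum_partition (n : ℕ) (x : Fin n → Bool) (F : (Fin n → Bool) → ℝ) :
    ∑ y : Fin n → Bool, F y
    = F x + ∑ j : Fin n, ∑ y ∈ Fintype.piFinset (fun m : Fin n =>
        if m < j then {x m} else if m = j then {!(x m)} else (Finset.univ : Finset Bool)), F y := by
  classical
  set C : Fin n → Finset (Fin n → Bool) := fun j => Fintype.piFinset (fun m : Fin n =>
      if m < j then {x m} else if m = j then {!(x m)} else (Finset.univ : Finset Bool)) with hC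
  have hmem : ∀ j (y : Fin n → Bool), y ∈ C j ↔
      ((∀ m, m < j → y m = x m) ∧ y j = !(x j)) := by
    intro j y
    rw [hC, Fintype.mem_piFinset]
    constructor
    · intro h
      constructor
      · intro m hm
        have := h m
        rw [if_pos hm] at this
        simpa using this
      · have := h j
        rw [if_neg (lt_irrefl j), if_pos rfl] at this
        simpa using this
    · rintro ⟨h1, h2⟩ m
      rcases lt_trichotomy m j with h | h | h
      · rw [if_pos h]; simp [h1 m h]
      · subst h; rw [if_neg (lt_irrefl m), if_pos rfl]; simp [h2]
      · rw [if_neg (not_lt_of_gt h), if_neg (ne_of_gt h)]; simp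
  have hxC : ∀ j, x ∉ C j := by
    intro j h
    have := ((hmem j x).mp h).2
    cases hxj : x j <;> rw [hxj] at this <;> simp at this
  have hdisj' : ∀ j j' : Fin n, j < j' → Disjoint (C j) (C j') := by
    intro j j' hjj'
    rw [Finset.disjoint_left]
    intro y hy hy'
    have h1 := ((hmem j y).mp hy).2
    have h2 := ((hmem j' y).mp hy').1 j hjj'
    rw [h2] at h1
    cases hxj : x j <;> rw [hxj] at h1 <;> simp at h1
  have hcover : (Finset.univ : Finset (Fin n → Bool)) = insert x (Finset.univ.biUnion C) := by
    ext y
    simp only [Finset.mem_univ, Finset.mem_insert, Finset.mem_biUnion, true_iff]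
    by_cases hyx : y = x
    · left; exact hyx
    · right
      have hne : (Finset.univ.filter (fun i : Fin n => y i ≠ x i)).Nonempty := by
        obtain ⟨i, hi⟩ := Function.ne_iff.mp hyx
        exact ⟨i, by simp [hi]⟩
      set j := (Finset.univ.filter (fun i : Fin n => y i ≠ x i)).min' hne with hj
      refine ⟨j, trivial, ?_⟩
      rw [hmem]
      constructor
      · intro m hm
        by_contra hmx
        have hms : m ∈ Finset.univ.filter (fun i : Fin n => y i ≠ x i) := by simp [hmx]
        exact absurd (Finset.min'_le _ m hms) (not_le_of_gt hm)
      · have hjs : j ∈ Finset.univ.filter (fun i : Fin n => y i ≠ x i) :=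
          Finset.min'_mem _ hne
        have : y j ≠ x j := by simpa using hjs
        cases hxj : x j <;> rw [hxj] at this <;> revert this <;> cases hyj : y j <;> simp
  rw [hcover, Finset.sum_insert (by
    intro h
    simp only [Finset.mem_biUnion] at h
    obtain ⟨j, _, hj⟩ := h
    exact hxC j hj)]
  congr 1
  rw [Finset.sum_biUnion]
  intro j _ j' _ hjj'
  rcases lt_or_gt_of_ne hjj' with h | h
  · exact hdisj' j j' h
  · exact (hdisj' j' j h).symm

private lemma core_ineq (k j : ℕ) (χ : ℝ) (hχ0 : 0 < χ) (hk1 : 1 ≤ k)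
    (hχk : χ * (k : ℝ) ≤ 1) (hjk : j < k) :
    (1 + ((k : ℝ) + 1 - ((j : ℕ) + 1)) / k) / 4
      ≤ (1 + ((k : ℝ) + 1 - ((j : ℕ) + 1)) / k)
        - χ * ∑ i ∈ Finset.Ico (j + 1) k, (1 + ((k : ℝ) + 1 - ((i : ℕ) + 1)) / k) := by
  have hK0 : (0 : ℝ) < k := by exact_mod_cast Nat.lt_of_lt_of_le Nat.zero_lt_one hk1
  have hK1 : (1 : ℝ) ≤ k := by exact_mod_cast hk1
  have hJK : (j : ℝ) + 1 ≤ k := by exact_mod_cast hjk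
  have hJ0 : (0 : ℝ) ≤ j := Nat.cast_nonneg j
  set K : ℝ := (k : ℝ) with hKdef
  set J : ℝ := (j : ℝ) with hJdef
  set A : ℝ := ∑ i ∈ Finset.Ico (j + 1) k, (1 + ((k : ℝ) + 1 - ((i : ℕ) + 1)) / k) with hA
  have hA0 : 0 ≤ A := by
    rw [hA]
    apply Finset.sum_nonneg
    intro i hi
    rw [Finset.mem_Ico] at hi
    have : (i : ℝ) + 1 ≤ K := by
      rw [hKdef]
      exact_mod_cast Nat.succ_le_of_lt hi.2
    have : 0 ≤ (K + 1 - ((i : ℕ) + 1)) / K := by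
      apply div_nonneg _ (le_of_lt hK0)
      linarith
    linarith
  have hAK : A * K = (K - J - 1) * (2 * K) - ((K * (K - 1)) - ((J + 1) * J)) / 2 := by
    rw [hA, Finset.sum_mul]
    have hterm : ∀ i ∈ Finset.Ico (j + 1) k,
        (1 + ((k : ℝ) + 1 - ((i : ℕ) + 1)) / k) * K = 2 * K - (i : ℝ) := by
      intro i _
      field_simp
      ring
    rw [Finset.sum_congr rfl hterm, Finset.sum_sub_distrib, Finset.sum_const, Nat.card_Ico,
      Finset.sum_Ico_eq_sub (fun i => (i : ℝ)) (by omega : j + 1 ≤ k)]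
    have h1 : (∑ i ∈ Finset.range k, (i : ℝ)) = K * (K - 1) / 2 := by
      have := gauss_sum k; linarith
    have h2 : (∑ i ∈ Finset.range (j + 1), (i : ℝ)) = (J + 1) * J / 2 := by
      have := gauss_sum (j + 1); push_cast at this ⊢; linarith
    rw [h1, h2]
    have hcard : ((k - (j + 1) : ℕ) : ℝ) = K - (J + 1) := by
      rw [Nat.cast_sub (by omega)]
      push_cast
      ring
    rw [nsmul_eq_mul, hcard]
    ring
  have hAle : A ≤ (3 / 4) * (2 * K - J) := by
    have h : A * K ≤ ((3 / 4) * (2 * K - J)) * K := by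
      rw [hAK]
      nlinarith [mul_nonneg hJ0 (by linarith : (0 : ℝ) ≤ K - J), hJ0, hK1, hJK]
    exact le_of_mul_le_mul_right h hK0
  have hχA : χ * A ≤ (3 / 4) * (2 * K - J) / K := by
    have hχK : χ ≤ 1 / K := by rw [le_div_iff₀ hK0]; exact hχk
    calc χ * A ≤ (1 / K) * A := mul_le_mul_of_nonneg_right hχK hA0
      _ ≤ (1 / K) * ((3 / 4) * (2 * K - J)) := by
          apply mul_le_mul_of_nonneg_left hAle
          positivity
      _ = (3 / 4) * (2 * K - J) / K := by ring
  have hWval : 1 + (K + 1 - (J + 1)) / K = (2 * K - J) / K := by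
    field_simp
    ring
  rw [hWval]
  have h2KJ : 0 ≤ 2 * K - J := by linarith
  have : (3 / 4) * (2 * K - J) / K = (3 / 4) * ((2 * K - J) / K) := by ring
  linarith [this ▸ hχA]

set_option maxHeartbeats 1000000 in
/-- One-step multiplicative drift of the potential
`g x = ∑_{i=1}^k w_i (1 - x_i)` with `w_i = 1 + (k + 1 - i)/k` for the
(1+1) EA with mutation rate `0 < χ < 1/2`, `k ≤ 1/χ`, on BinVal:
`E[g x − g x'] ≥ χ · g x / (4e)`, the expectation being over the random mutation. -/
theorem one_step_multiplicative_drift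
    (n k : ℕ) (χ : ℝ) (hχ0 : 0 < χ) (hχ1 : χ < 1 / 2)
    (hk1 : 1 ≤ k) (hkn : k ≤ n) (hkχ : (k : ℝ) ≤ 1 / χ)
    (g : (Fin n → Bool) → ℝ)
    (hg : ∀ x, g x = ∑ i ∈ Finset.univ.filter (fun i : Fin n => (i : ℕ) < k),
      (1 + ((k : ℝ) + 1 - ((i : ℕ) + 1)) / k) * (if x i then 0 else 1))
    (x : Fin n → Bool) (hx : 0 < g x) :
    χ * g x / (4 * Real.exp 1) ≤
      ∑ y : Fin n → Bool, flipProb n χ x y * (g x - g (select n x y)) := by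
  classical
  have hχk : χ * (k : ℝ) ≤ 1 := by
    have h := (le_div_iff₀ hχ0).mp hkχ
    linarith
  have hχ1' : χ < 1 := by linarith
  have h1χ : (0 : ℝ) < 1 - χ := by linarith
  -- weight function
  set W : Fin n → ℝ := fun i => 1 + ((k : ℝ) + 1 - ((i : ℕ) + 1)) / k with hW
  have hK0 : (0 : ℝ) < (k : ℝ) := by exact_mod_cast Nat.lt_of_lt_of_le Nat.zero_lt_one hk1
  have hW0 : ∀ i : Fin n, (i : ℕ) < k → 0 ≤ W i := by
    intro i hik
    have : (i : ℝ) + 1 ≤ (k : ℝ) + 1 := by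
      have : (i : ℝ) ≤ (k : ℝ) := by exact_mod_cast le_of_lt hik
      linarith
    have : 0 ≤ ((k : ℝ) + 1 - ((i : ℕ) + 1)) / k := by
      apply div_nonneg _ (le_of_lt hK0)
      push_cast
      linarith
    rw [hW]
    dsimp only
    linarith
  set c : ℝ := χ * (1 - χ) ^ (k - 1) / 4 with hc
  set filt : Finset (Fin n) := Finset.univ.filter (fun i : Fin n => (i : ℕ) < k) with hfilt
  set C : Fin n → Finset (Fin n → Bool) := fun j => Fintype.piFinset (fun m : Fin n =>
      if m < j then {x m} else if m = j then {!(x m)} else (Finset.univ : Finset Bool)) with hC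
  have hgW : ∀ z : Fin n → Bool, g z = ∑ i ∈ filt, W i * (if z i then (0 : ℝ) else 1) := by
    intro z
    rw [hg z]
  -- exponential bound
  have hexp1 : 1 ≤ Real.exp 1 * (1 - χ) ^ (k - 1) := by
    set t : ℝ := χ / (1 - χ) with htdef
    have ht0 : 0 ≤ t := by positivity
    have h1 : 1 + t ≤ Real.exp t := by
      have := Real.add_one_le_exp t
      linarith
    have hprod : (1 - χ) * (1 + t) = 1 := by
      rw [htdef]
      field_simp
      ring
    have h2 : Real.exp (-t) ≤ 1 - χ := by
      rw [Real.exp_neg, inv_eq_one_div, div_le_iff₀ (Real.exp_pos t)]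
      nlinarith [mul_le_mul_of_nonneg_left h1 (le_of_lt h1χ)]
    have h3 : Real.exp (-t) ^ (k - 1) ≤ (1 - χ) ^ (k - 1) :=
      pow_le_pow_left₀ (Real.exp_nonneg _) h2 _
    have h4 : Real.exp (-t) ^ (k - 1) = Real.exp (((k - 1 : ℕ) : ℝ) * (-t)) :=
      (Real.exp_nat_mul _ _).symm
    have h5 : (-1 : ℝ) ≤ ((k - 1 : ℕ) : ℝ) * (-t) := by
      have hcast : ((k - 1 : ℕ) : ℝ) = (k : ℝ) - 1 := by
        rw [Nat.cast_sub hk1]; norm_num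
      rw [hcast]
      have ht1 : ((k : ℝ) - 1) * t ≤ 1 := by
        rw [htdef, ← mul_div_assoc, div_le_one h1χ]
        nlinarith
      nlinarith
    have h6 : Real.exp (-1) ≤ (1 - χ) ^ (k - 1) := by
      calc Real.exp (-1) ≤ Real.exp (((k - 1 : ℕ) : ℝ) * (-t)) := Real.exp_le_exp.mpr h5
        _ = Real.exp (-t) ^ (k - 1) := h4.symm
        _ ≤ (1 - χ) ^ (k - 1) := h3
    calc (1 : ℝ) = Real.exp 1 * Real.exp (-1) := by
          rw [← Real.exp_add]; norm_num
      _ ≤ Real.exp 1 * (1 - χ) ^ (k - 1) :=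
          mul_le_mul_of_nonneg_left h6 (Real.exp_nonneg 1)
  -- the main per-class bound
  have key : ∀ j : Fin n,
      (if x j = false ∧ (j : ℕ) < k then c * W j else 0)
        ≤ ∑ y ∈ C j, flipProb n χ x y * (g x - g (select n x y)) := by
    intro j
    have hmemC : ∀ y ∈ C j, (∀ i : Fin n, i < j → y i = x i) ∧ y j = !(x j) := by
      intro y hy
      rw [hC, Fintype.mem_piFinset] at hy
      constructor
      · intro i hi
        have := hy i
        rw [if_pos hi] at this
        simpa using this
      · have := hy j
        rw [if_neg (lt_irrefl j), if_pos rfl] at this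
        simpa using this
    by_cases hxj : x j = true
    · -- rejected: everything is 0
      have hzero : ∀ y ∈ C j, flipProb n χ x y * (g x - g (select n x y)) = 0 := by
        intro y hy
        obtain ⟨hagree, hyj⟩ := hmemC y hy
        have hyjf : y j = false := by rw [hyj, hxj]; rfl
        have hlt : binVal n y < binVal n x := by
          apply binVal_lt_binVal n y x j _ hyjf hxj
          intro i hi
          exact hagree i hi
        have hsel : select n x y = x := by
          unfold select
          rw [if_neg (not_le_of_gt hlt)]
        rw [hsel, sub_self, mul_zero]
      rw [Finset.sum_eq_zero hzero, if_neg (by simp [hxj])]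
    · have hxjf : x j = false := by
        cases h : x j
        · rfl
        · exact absurd h hxj
      -- accepted for all y in the class
      have hsel : ∀ y ∈ C j, select n x y = y := by
        intro y hy
        obtain ⟨hagree, hyj⟩ := hmemC y hy
        have hyjt : y j = true := by rw [hyj, hxjf]; rfl
        have hlt : binVal n x < binVal n y := by
          apply binVal_lt_binVal n x y j _ hxjf hyjt
          intro i hi
          exact (hagree i hi).symm
        unfold select
        rw [if_pos (le_of_lt hlt)]
      set B : ℝ := (1 - χ) ^ (j : ℕ) * χ with hB
      -- E-value
      set Ei : Fin n → ℝ := fun i =>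
        (if i < j then (if x i then (0 : ℝ) else 1) else if i = j then (if !(x j) then (0 : ℝ) else 1)
          else ((if x i = true then 1 - χ else χ) * 0 + (if x i = false then 1 - χ else χ) * 1)) with hEi
      have hPsum : ∑ y ∈ C j, flipProb n χ x y = B := by
        have h := class_sum n χ x j j (fun _ => (1 : ℝ))
        simp only [lt_irrefl, if_neg (lt_irrefl j), if_pos rfl, mul_one] at h
        rw [hC]
        simpa using h
      have hPc : ∀ i : Fin n,
          ∑ y ∈ C j, flipProb n χ x y * (if y i then (0 : ℝ) else 1) = B * Ei i := by
        intro i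
        have h := class_sum n χ x j i (fun b => if b then (0 : ℝ) else 1)
        rw [hC, hB, hEi]
        convert h using 2
        simp
      set S : ℝ := ∑ i ∈ filt, W i * ((if x i then (0 : ℝ) else 1) - Ei i) with hS
      have hSj : ∑ y ∈ C j, flipProb n χ x y * (g x - g (select n x y)) = B * S := by
        calc ∑ y ∈ C j, flipProb n χ x y * (g x - g (select n x y))
            = ∑ y ∈ C j, flipProb n χ x y * (g x - g y) := by
              apply Finset.sum_congr rfl
              intro y hy
              rw [hsel y hy]
          _ = ∑ y ∈ C j, ∑ i ∈ filt,
                (W i * (if x i then (0 : ℝ) else 1) * flipProb n χ x y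
                  - W i * (flipProb n χ x y * (if y i then (0 : ℝ) else 1))) := by
              apply Finset.sum_congr rfl
              intro y _
              rw [Finset.sum_sub_distrib]
              have e1 : ∑ i ∈ filt, W i * (if x i then (0 : ℝ) else 1) * flipProb n χ x y
                  = g x * flipProb n χ x y := by
                rw [hgW x, Finset.sum_mul]
              have e2 : ∑ i ∈ filt, W i * (flipProb n χ x y * (if y i then (0 : ℝ) else 1))
                  = flipProb n χ x y * g y := by
                rw [hgW y, Finset.mul_sum]
                apply Finset.sum_congr rfl
                intro i _
                ring
              rw [e1, e2]
              ring
          _ = ∑ i ∈ filt, ∑ y ∈ C j,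
                (W i * (if x i then (0 : ℝ) else 1) * flipProb n χ x y
                  - W i * (flipProb n χ x y * (if y i then (0 : ℝ) else 1))) := Finset.sum_comm
          _ = ∑ i ∈ filt, (W i * (if x i then (0 : ℝ) else 1) * B - W i * (B * Ei i)) := by
              apply Finset.sum_congr rfl
              intro i _
              rw [Finset.sum_sub_distrib]
              congr 1
              · rw [← Finset.mul_sum, hPsum]
              · rw [← Finset.mul_sum, hPc i]
          _ = B * S := by
              rw [hS, Finset.mul_sum]
              apply Finset.sum_congr rfl
              intro i _
              ring
      have hB0 : 0 ≤ B := by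
        rw [hB]
        positivity
      by_cases hjk : (j : ℕ) < k
      · -- the real bound
        have hjmem : j ∈ filt := by rw [hfilt]; simp [hjk]
        have hSsplit : S = W j * ((if x j then (0 : ℝ) else 1) - Ei j)
            + ∑ i ∈ filt.erase j, W i * ((if x i then (0 : ℝ) else 1) - Ei i) := by
          rw [hS, ← Finset.add_sum_erase _ _ hjmem]
        have hEij : Ei j = 0 := by
          rw [hEi]
          simp [hxjf]
        have htermj : W j * ((if x j then (0 : ℝ) else 1) - Ei j) = W j := by
          rw [hEij, hxjf]
          norm_num
        set A : ℝ := ∑ i ∈ Finset.Ico ((j : ℕ) + 1) k, (1 + ((k : ℝ) + 1 - ((i : ℕ) + 1)) / k)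
          with hA
        have hrest : -(χ * A) ≤ ∑ i ∈ filt.erase j, W i * ((if x i then (0 : ℝ) else 1) - Ei i) := by
          have hpt : ∀ i ∈ filt.erase j,
              (if j < i then -(χ * W i) else 0) ≤ W i * ((if x i then (0 : ℝ) else 1) - Ei i) := by
            intro i hi
            have hij : i ≠ j := (Finset.mem_erase.mp hi).1
            have hik : (i : ℕ) < k := by
              have := (Finset.mem_erase.mp hi).2
              rw [hfilt] at this
              simpa using this
            rcases lt_trichotomy i j with h | h | h
            · rw [if_neg (asymm h), hEi]
              simp only [if_pos h]
              simp
            · exact absurd h hij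
            · rw [if_pos h, hEi]
              simp only [if_neg (asymm h), if_neg hij]
              have hWi := hW0 i hik
              cases hxi : x i
              · simp only [hxi]
                norm_num
                nlinarith
              · simp only [hxi]
                norm_num
                nlinarith
          calc -(χ * A)
              = ∑ i ∈ filt.erase j, (if j < i then -(χ * W i) else 0) := by
                rw [← Finset.sum_filter]
                have hseteq : (filt.erase j).filter (fun i => j < i)
                    = Finset.univ.filter (fun i : Fin n => (i : ℕ) < k ∧ (j : ℕ) < (i : ℕ)) := by
                  ext i
                  rw [hfilt]
                  simp only [Finset.mem_filter, Finset.mem_erase, Finset.mem_univ, true_and,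
                    Fin.lt_def, ne_eq, Fin.ext_iff]
                  omega
                rw [hseteq]
                have : ∑ i ∈ Finset.univ.filter (fun i : Fin n => (i : ℕ) < k ∧ (j : ℕ) < (i : ℕ)),
                    -(χ * W i) = -(χ * ∑ i ∈ Finset.univ.filter
                      (fun i : Fin n => (i : ℕ) < k ∧ (j : ℕ) < (i : ℕ)), W i) := by
                  rw [Finset.sum_neg_distrib, Finset.mul_sum]
                rw [this]
                congr 1
                congr 1
                -- identify the Fin-sum with the Ico-sum
                rw [hA]
                simp only [hW]
                rw [Finset.sum_filter]
                rw [Fin.sum_univ_eq_sum_range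
                  (fun i : ℕ => if i < k ∧ (j : ℕ) < i then 1 + ((k : ℝ) + 1 - (i + 1)) / k else 0) n]
                rw [← Finset.sum_filter]
                apply Finset.sum_congr
                · ext i
                  simp only [Finset.mem_filter, Finset.mem_range, Finset.mem_Ico]
                  omega
                · intros; rfl
              _ ≤ ∑ i ∈ filt.erase j, W i * ((if x i then (0 : ℝ) else 1) - Ei i) :=
                Finset.sum_le_sum hpt
        have hcore := core_ineq k (j : ℕ) χ hχ0 hk1 hχk hjk
        have hSlb : W j / 4 ≤ S := by
          rw [hSsplit, htermj]
          have : W j = 1 + ((k : ℝ) + 1 - ((j : ℕ) + 1)) / k := by rw [hW]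
          rw [this] at *
          linarith [hrest, hcore]
        -- combine with B
        have hBlb : χ * (1 - χ) ^ (k - 1) ≤ B := by
          rw [hB]
          have hpow : (1 - χ) ^ (k - 1) ≤ (1 - χ) ^ (j : ℕ) :=
            pow_le_pow_of_le_one (le_of_lt h1χ) (by linarith) (by omega)
          nlinarith [hpow, hχ0.le]
        rw [hSj, if_pos ⟨hxjf, hjk⟩]
        have hWj4 : 0 ≤ W j / 4 := div_nonneg (hW0 j hjk) (by norm_num)
        calc c * W j = (χ * (1 - χ) ^ (k - 1)) * (W j / 4) := by rw [hc]; ring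
          _ ≤ B * S := by
            apply mul_le_mul hBlb hSlb hWj4 hB0
      · -- j ≥ k : S = 0
        have hSzero : S = 0 := by
          rw [hS]
          apply Finset.sum_eq_zero
          intro i hi
          have hik : (i : ℕ) < k := by
            rw [hfilt] at hi
            simpa using hi
          have hij : i < j := by
            rw [Fin.lt_def]
            omega
          rw [hEi]
          simp only [if_pos hij]
          simp
        rw [hSj, hSzero, mul_zero, if_neg (by tauto)]
  -- assemble
  rw [sum_partition n x (fun y => flipProb n χ x y * (g x - g (select n x y)))]
  have hselfx : select n x x = x := by unfold select; split <;> rfl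
  have hfirst : flipProb n χ x x * (g x - g (select n x x)) = 0 := by
    rw [hselfx, sub_self, mul_zero]
  rw [hfirst, zero_add]
  have hgsum : c * g x = ∑ j : Fin n, (if x j = false ∧ (j : ℕ) < k then c * W j else 0) := by
    rw [hgW x, Finset.mul_sum, hfilt, Finset.sum_filter]
    apply Finset.sum_congr rfl
    intro j _
    by_cases hjk : (j : ℕ) < k <;> by_cases hxj : x j <;> simp [hjk, hxj]
  have hfinal : χ * g x / (4 * Real.exp 1) ≤ c * g x := by
    rw [div_le_iff₀ (by positivity)]
    rw [hc]
    have h := mul_le_mul_of_nonneg_left hexp1 (le_of_lt (mul_pos hχ0 hx))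
    nlinarith [h]
  calc χ * g x / (4 * Real.exp 1) ≤ c * g x := hfinal
    _ = ∑ j : Fin n, (if x j = false ∧ (j : ℕ) < k then c * W j else 0) := hgsum
    _ ≤ ∑ j : Fin n, ∑ y ∈ C j, flipProb n χ x y * (g x - g (select n x y)) :=
        Finset.sum_le_sum (fun j _ => key j)

end
end

section
/- Let n ∈ ℕ with n ≥ 3 and let k ∈ ℕ with 2 ≤ k ≤ n. For the standard (1+1) EA with mutation rate χ = 1/n on BinVal, the expected number of iterations until the first k bits are all set to 1 satisfies E[T_k] ≤ 4e·n·(1 + ln(2k)); in particular E[T_k] = O(n log k). -/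
open Finset


open scoped BigOperators ENNReal

noncomputable section

/-- Transition kernel of the (1+1) EA with fixed mutation rate `χ` on BinVal. -/
def stepKer (n : ℕ) (χ : ℝ) (x x' : Fin n → Bool) : ℝ≥0∞ :=
  ∑ y : Fin n → Bool,
    ENNReal.ofReal (flipProb n χ x y) * (if select n x y = x' then 1 else 0)

/-- `alive init step A t s` is the probability that the Markov chain with initial
distribution `init` and transition kernel `step` is in state `s` at time `t` and
has not yet visited the target set `A` (so `∑' s, alive init step A t s = P(T > t)`
for the first hitting time `T` of `A`). -/
def alive {σ : Type*} (init : σ → ℝ≥0∞) (step : σ → σ → ℝ≥0∞) (A : Set σ) :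
    ℕ → σ → ℝ≥0∞
  | 0 => Aᶜ.indicator init
  | t + 1 => Aᶜ.indicator (fun s' => ∑' s, alive init step A t s * step s s')

/-- Expected first hitting time `E[T] = ∑_{t ≥ 0} P(T > t)` of the target set `A`
for the Markov chain given by `init` and `step`. -/
def hitTimeExp {σ : Type*} (init : σ → ℝ≥0∞) (step : σ → σ → ℝ≥0∞) (A : Set σ) : ℝ≥0∞ :=
  ∑' t : ℕ, ∑' s : σ, alive init step A t s

/-- Target set: the first `k` bits are all `1`. -/
def firstKOnes (n k : ℕ) : Set (Fin n → Bool) :=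
  {x | ∀ i : Fin n, (i : ℕ) < k → x i = true}

/-- Uniform initial distribution on `{0,1}^n`. -/
def uniformInit (n : ℕ) : (Fin n → Bool) → ℝ≥0∞ := fun _ => (2 : ℝ≥0∞)⁻¹ ^ n



lemma sum_prod_bool (n : ℕ) (ψ : Fin n → Bool → ℝ) :
    ∑ y : Fin n → Bool, ∏ i, ψ i (y i) = ∏ i, (ψ i true + ψ i false) := by
  classical
  have h := Finset.prod_univ_sum (fun _ : Fin n => (Finset.univ : Finset Bool)) ψ
  rw [Fintype.piFinset_univ] at h
  rw [← h]
  exact (Finset.prod_congr rfl fun i _ => by rw [Fintype.sum_bool]).symm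

lemma sum_two_pow (t : ℕ) : ∑ e ∈ range t, 2 ^ e = 2 ^ t - 1 := by
  induction t with
  | zero => simp
  | succ t ih =>
    rw [Finset.sum_range_succ, ih]
    have h1 : 1 ≤ 2 ^ t := Nat.one_le_two_pow
    have h2 : 2 ^ (t + 1) = 2 ^ t * 2 := pow_succ 2 t
    omega

lemma tail_sum_le (n : ℕ) (m : Fin n) :
    ∑ i ∈ univ.filter (fun i : Fin n => m < i), 2 ^ (n - 1 - (i : ℕ)) ≤ 2 ^ (n - 1 - (m : ℕ)) - 1 := by
  classical
  have hinj : ∀ x ∈ univ.filter (fun i : Fin n => m < i), ∀ y ∈ univ.filter (fun i : Fin n => m < i),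
      (fun i : Fin n => n - 1 - (i : ℕ)) x = (fun i : Fin n => n - 1 - (i : ℕ)) y → x = y := by
    intro a ha b hb hab
    simp only [Finset.mem_filter, Finset.mem_univ, true_and] at ha hb
    dsimp only at hab
    have h1 := a.isLt; have h2 := b.isLt
    have h3 : (m : ℕ) < (a : ℕ) := ha
    have h4 : (m : ℕ) < (b : ℕ) := hb
    exact Fin.ext (by omega)
  have himg : ∑ i ∈ univ.filter (fun i : Fin n => m < i), 2 ^ (n - 1 - (i : ℕ))
      = ∑ e ∈ (univ.filter (fun i : Fin n => m < i)).image (fun i : Fin n => n - 1 - (i : ℕ)), 2 ^ e :=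
    (Finset.sum_image (g := fun i : Fin n => n - 1 - (i : ℕ)) (f := fun e : ℕ => 2 ^ e) hinj).symm
  rw [himg]
  calc ∑ e ∈ (univ.filter (fun i : Fin n => m < i)).image (fun i : Fin n => n - 1 - (i : ℕ)), 2 ^ e
      ≤ ∑ e ∈ range (n - 1 - (m : ℕ)), 2 ^ e := by
        apply Finset.sum_le_sum_of_subset
        intro e he
        simp only [Finset.mem_image, Finset.mem_filter, Finset.mem_univ, true_and] at he
        obtain ⟨i, hmi, rfl⟩ := he
        have h1 := i.isLt
        have h2 : (m : ℕ) < (i : ℕ) := hmi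
        simp only [Finset.mem_range]
        omega
    _ = 2 ^ (n - 1 - (m : ℕ)) - 1 := sum_two_pow _

lemma binVal_split (n : ℕ) (z : Fin n → Bool) (m : Fin n) :
    binVal n z = (∑ i ∈ univ.filter (fun i : Fin n => i < m), if z i then 2 ^ (n - 1 - (i : ℕ)) else 0)
      + ((if z m then 2 ^ (n - 1 - (m : ℕ)) else 0)
        + ∑ i ∈ univ.filter (fun i : Fin n => m < i), if z i then 2 ^ (n - 1 - (i : ℕ)) else 0) := by
  classical
  rw [binVal, ← Finset.sum_filter_add_sum_filter_not univ (fun i : Fin n => i < m)]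
  congr 1
  have hset : univ.filter (fun i : Fin n => ¬ i < m) = insert m (univ.filter (fun i : Fin n => m < i)) := by
    ext i
    simp only [Finset.mem_filter, Finset.mem_univ, true_and, Finset.mem_insert, not_lt]
    constructor
    · intro h
      rcases eq_or_lt_of_le h with h' | h'
      · exact Or.inl h'.symm
      · exact Or.inr h'
    · rintro (rfl | h)
      · exact le_rfl
      · exact h.le
  rw [hset, Finset.sum_insert (by simp)]

lemma binVal_lt_of_msb (n : ℕ) (x y : Fin n → Bool) (m : Fin n) (hx : x m = false)
    (hy : y m = true) (hpre : ∀ j : Fin n, j < m → x j = y j) : binVal n x < binVal n y := by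
  classical
  rw [binVal_split n x m, binVal_split n y m, hx, hy]
  have hS1 : (∑ i ∈ univ.filter (fun i : Fin n => i < m), if x i then 2 ^ (n - 1 - (i : ℕ)) else 0)
      = ∑ i ∈ univ.filter (fun i : Fin n => i < m), if y i then 2 ^ (n - 1 - (i : ℕ)) else 0 := by
    apply Finset.sum_congr rfl
    intro i hi
    rw [hpre i (by simpa using hi)]
  rw [hS1]
  have h3x : (∑ i ∈ univ.filter (fun i : Fin n => m < i), if x i then 2 ^ (n - 1 - (i : ℕ)) else 0)
      ≤ 2 ^ (n - 1 - (m : ℕ)) - 1 := by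
    refine le_trans (Finset.sum_le_sum fun i _ => ?_) (tail_sum_le n m)
    split <;> simp
  have hpos : 1 ≤ 2 ^ (n - 1 - (m : ℕ)) := Nat.one_le_two_pow
  have h3y : (0:ℕ) ≤ ∑ i ∈ univ.filter (fun i : Fin n => m < i), if y i then 2 ^ (n - 1 - (i : ℕ)) else 0 :=
    Nat.zero_le _
  have e1 : (if (false:Bool) = true then 2 ^ (n - 1 - (m:ℕ)) else 0) = 0 := by simp
  have e2 : (if (true:Bool) = true then 2 ^ (n - 1 - (m:ℕ)) else 0) = 2 ^ (n-1-(m:ℕ)) := by simp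
  rw [e1, e2]
  omega

/-- weight of bit `j` -/
def wt (k : ℕ) (χ : ℝ) (j : ℕ) : ℝ := (1 + 2 * χ) ^ (k - 1 - j)

/-- potential: weighted count of zero bits in the prefix -/
def gpot (n k : ℕ) (χ : ℝ) (x : Fin n → Bool) : ℝ :=
  ∑ i : Fin n, if (i : ℕ) < k ∧ x i = false then wt k χ (i : ℕ) else 0

def indA (n : ℕ) (x y : Fin n → Bool) (m : Fin n) : ℝ :=
  if y m ≠ x m ∧ ∀ j : Fin n, j < m → y j = x j then 1 else 0

lemma wt_nonneg {k : ℕ} {χ : ℝ} (hχ : 0 ≤ χ) (j : ℕ) : 0 ≤ wt k χ j :=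
  pow_nonneg (by linarith) _

lemma one_le_wt {k : ℕ} {χ : ℝ} (hχ : 0 ≤ χ) (j : ℕ) : 1 ≤ wt k χ j :=
  one_le_pow₀ (by linarith)

lemma gpot_nonneg {n k : ℕ} {χ : ℝ} (hχ : 0 ≤ χ) (x : Fin n → Bool) : 0 ≤ gpot n k χ x :=
  Finset.sum_nonneg fun i _ => by
    split
    · exact wt_nonneg hχ _
    · exact le_refl 0

lemma gpot_prefix_congr {n k : ℕ} {χ : ℝ} {x y : Fin n → Bool}
    (h : ∀ i : Fin n, (i : ℕ) < k → x i = y i) : gpot n k χ x = gpot n k χ y := by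
  apply Finset.sum_congr rfl
  intro i _
  by_cases hik : (i : ℕ) < k
  · rw [h i hik]
  · simp [hik]

lemma pointwise_bound (n k : ℕ) (χ : ℝ) (hχ : 0 ≤ χ) (x y : Fin n → Bool) :
    gpot n k χ (select n x y) ≤ gpot n k χ x -
      ∑ m ∈ univ.filter (fun m : Fin n => (m : ℕ) < k ∧ x m = false),
        indA n x y m * (wt k χ (m : ℕ) -
          ∑ j ∈ univ.filter (fun j : Fin n => m < j ∧ (j : ℕ) < k),
            (if y j = x j then 0 else 1) * wt k χ (j : ℕ)) := by
  classical
  by_cases hne : (univ.filter (fun i : Fin n => y i ≠ x i)).Nonempty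
  case neg =>
    -- y = x
    have hyx : y = x := by
      funext i
      by_contra hc
      exact hne ⟨i, by simp [hc]⟩
    rw [hyx]
    have hsel : select n x x = x := by unfold select; rw [if_pos le_rfl]
    rw [hsel]
    have hz : ∀ m ∈ univ.filter (fun m : Fin n => (m : ℕ) < k ∧ x m = false),
        indA n x x m * (wt k χ (m : ℕ) -
          ∑ j ∈ univ.filter (fun j : Fin n => m < j ∧ (j : ℕ) < k),
            (if x j = x j then 0 else 1) * wt k χ (j : ℕ)) = 0 := by
      intro m _
      simp [indA]
    rw [Finset.sum_eq_zero hz]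
    simp
  case pos =>
    set D := univ.filter (fun i : Fin n => y i ≠ x i) with hD
    set m₀ := D.min' hne with hm₀
    have hm₀mem : y m₀ ≠ x m₀ := by
      have := D.min'_mem hne
      simpa [hD] using this
    have hm₀min : ∀ j : Fin n, j < m₀ → y j = x j := by
      intro j hj
      by_contra hc
      exact absurd (D.min'_le j (by simp [hD, hc])) (not_le.mpr hj)
    -- indA is the indicator of m = m₀
    have hind : ∀ m : Fin n, indA n x y m = if m = m₀ then 1 else 0 := by
      intro m
      unfold indA
      by_cases h : y m ≠ x m ∧ ∀ j : Fin n, j < m → y j = x j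
      · rw [if_pos h]
        have hmm : m = m₀ := by
          have h1 : m₀ ≤ m := D.min'_le m (by simp [hD, h.1])
          rcases eq_or_lt_of_le h1 with h2 | h2
          · exact h2.symm
          · exact absurd (h.2 m₀ h2) hm₀mem
        rw [if_pos hmm]
      · rw [if_neg h]
        have : ¬ m = m₀ := by
          rintro rfl
          exact h ⟨hm₀mem, hm₀min⟩
        rw [if_neg this]
    -- collapse the sum over Zx to the single term at m₀
    have hsum : ∑ m ∈ univ.filter (fun m : Fin n => (m : ℕ) < k ∧ x m = false),
        indA n x y m * (wt k χ (m : ℕ) -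
          ∑ j ∈ univ.filter (fun j : Fin n => m < j ∧ (j : ℕ) < k),
            (if y j = x j then 0 else 1) * wt k χ (j : ℕ))
        = if m₀ ∈ univ.filter (fun m : Fin n => (m : ℕ) < k ∧ x m = false) then
            (wt k χ (m₀ : ℕ) -
              ∑ j ∈ univ.filter (fun j : Fin n => m₀ < j ∧ (j : ℕ) < k),
                (if y j = x j then 0 else 1) * wt k χ (j : ℕ)) else 0 := by
      rw [Finset.sum_congr rfl (fun m _ => by rw [hind m, ite_mul, one_mul, zero_mul])]
      exact Finset.sum_ite_eq' _ m₀ _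
    rw [hsum]
    by_cases hmem : m₀ ∈ univ.filter (fun m : Fin n => (m : ℕ) < k ∧ x m = false)
    case neg =>
      rw [if_neg hmem]
      simp only [Finset.mem_filter, Finset.mem_univ, true_and, not_and] at hmem
      by_cases hxm : x m₀ = false
      case neg =>
        -- x m₀ = true, y m₀ = false: rejected
        have hxt : x m₀ = true := by
          revert hxm; cases x m₀ <;> simp
        have hyf : y m₀ = false := by
          revert hm₀mem; rw [hxt]; cases y m₀ <;> simp
        have hlt : binVal n y < binVal n x :=
          binVal_lt_of_msb n y x m₀ hyf hxt (fun j hj => hm₀min j hj)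
        have hsel : select n x y = x := by
          unfold select; rw [if_neg (not_le.mpr hlt)]
        rw [hsel]; simp
      case pos =>
        -- x m₀ = false, m₀ ≥ k: accepted but prefix unchanged
        have hyt : y m₀ = true := by
          revert hm₀mem; rw [hxm]; cases y m₀ <;> simp
        have hlt : binVal n x < binVal n y :=
          binVal_lt_of_msb n x y m₀ hxm hyt (fun j hj => (hm₀min j hj).symm)
        have hsel : select n x y = y := by
          unfold select; rw [if_pos hlt.le]
        have hk₀ : ¬ (m₀ : ℕ) < k := fun hc => by simp [hc, hxm] at hmem
        have hgeq : gpot n k χ y = gpot n k χ x := by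
          apply gpot_prefix_congr
          intro i hik
          have : i < m₀ := by
            rw [Fin.lt_def]; omega
          exact hm₀min i this
        rw [hsel, hgeq]; simp
    case pos =>
      rw [if_pos hmem]
      simp only [Finset.mem_filter, Finset.mem_univ, true_and] at hmem
      obtain ⟨hm₀k, hxm⟩ := hmem
      have hyt : y m₀ = true := by
        revert hm₀mem; rw [hxm]; cases y m₀ <;> simp
      have hlt : binVal n x < binVal n y :=
        binVal_lt_of_msb n x y m₀ hxm hyt (fun j hj => (hm₀min j hj).symm)
      have hsel : select n x y = y := by
        unfold select; rw [if_pos hlt.le]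
      rw [hsel]
      have key : wt k χ (m₀ : ℕ) -
          ∑ j ∈ univ.filter (fun j : Fin n => m₀ < j ∧ (j : ℕ) < k),
            (if y j = x j then 0 else 1) * wt k χ (j : ℕ)
          ≤ gpot n k χ x - gpot n k χ y := by
        have hL : wt k χ ((m₀ : Fin n) : ℕ) = ∑ i : Fin n, (if i = m₀ then wt k χ (i : ℕ) else 0) := by
          rw [Finset.sum_ite_eq' univ m₀ (fun i : Fin n => wt k χ (i : ℕ))]
          simp
        have hS : ∑ j ∈ univ.filter (fun j : Fin n => m₀ < j ∧ (j : ℕ) < k),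
            (if y j = x j then 0 else 1) * wt k χ (j : ℕ)
            = ∑ i : Fin n, (if m₀ < i ∧ (i : ℕ) < k then (if y i = x i then 0 else 1) * wt k χ (i : ℕ) else 0) :=
          Finset.sum_filter _ _
        rw [hL, hS, gpot, gpot, ← Finset.sum_sub_distrib, ← Finset.sum_sub_distrib]
        apply Finset.sum_le_sum
        intro i _
        rcases lt_trichotomy i m₀ with hlt' | heq | hgt
        · have hyi := hm₀min i hlt'
          have h1 : ¬ i = m₀ := ne_of_lt hlt'
          have h2 : ¬ m₀ < i := asymm hlt'
          rw [hyi]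
          simp [h1, h2]
        · subst heq
          simp [hxm, hyt, hm₀k, lt_irrefl]
        · have h1 : ¬ i = m₀ := ne_of_gt hgt
          by_cases hik : (i : ℕ) < k
          · by_cases hyx : y i = x i
            · rw [hyx]; simp [h1, hgt, hik]
            · have hw := wt_nonneg (k := k) hχ (i : ℕ)
              simp only [if_neg h1, hik, hgt, and_true, true_and, if_true, if_neg hyx, one_mul]
              split_ifs <;> linarith
          · simp [h1, hik]
      linarith [key]

lemma flipProb_nonneg {n : ℕ} {χ : ℝ} (hχ0 : 0 ≤ χ) (hχ1 : χ ≤ 1) (x y : Fin n → Bool) :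
    0 ≤ flipProb n χ x y := by
  apply Finset.prod_nonneg
  intro i _
  split <;> linarith

lemma sum_flipProb {n : ℕ} {χ : ℝ} (x : Fin n → Bool) :
    ∑ y : Fin n → Bool, flipProb n χ x y = 1 := by
  have h : ∑ y : Fin n → Bool, flipProb n χ x y
      = ∏ i : Fin n, ((if x i = true then 1 - χ else χ) + (if x i = false then 1 - χ else χ)) := by
    exact sum_prod_bool n (fun i b => if x i = b then 1 - χ else χ)
  rw [h]
  apply Finset.prod_eq_one
  intro i _
  cases hx : x i <;> simp [hx] <;> ring

lemma prod_piecewise (n : ℕ) (m : Fin n) (a b : ℝ) :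
    ∏ i : Fin n, (if (i : ℕ) < (m : ℕ) then a else if i = m then b else 1) = b * a ^ (m : ℕ) := by
  have hcong : ∀ i : Fin n,
      (if (i : ℕ) < (m : ℕ) then a else if i = m then b else 1)
      = (fun j : ℕ => if j < (m : ℕ) then a else if j = (m : ℕ) then b else 1) ((i : ℕ)) := by
    intro i
    dsimp only
    by_cases h1 : (i : ℕ) < (m : ℕ)
    · rw [if_pos h1, if_pos h1]
    · rw [if_neg h1, if_neg h1]
      by_cases h2 : i = m
      · rw [if_pos h2, if_pos (by rw [h2])]
      · rw [if_neg h2, if_neg (fun hc => h2 (Fin.ext hc))]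
  rw [Finset.prod_congr rfl (fun i _ => hcong i),
    Fin.prod_univ_eq_prod_range (fun j : ℕ => if j < (m : ℕ) then a else if j = (m : ℕ) then b else 1) n]
  obtain ⟨t, ht⟩ : ∃ t, n = (m : ℕ) + (t + 1) := ⟨n - (m : ℕ) - 1, by have := m.isLt; omega⟩
  have hrange : range n = range ((m : ℕ) + (t + 1)) := by rw [← ht]
  rw [hrange, Finset.prod_range_add, Finset.prod_range_succ']
  have e1 : ∀ j ∈ range (m : ℕ), (if j < (m : ℕ) then a else if j = (m : ℕ) then b else 1) = a := by
    intro j hj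
    rw [if_pos (Finset.mem_range.mp hj)]
  have e2 : ∀ j ∈ range t,
      (if (m : ℕ) + (j + 1) < (m : ℕ) then a else if (m : ℕ) + (j + 1) = (m : ℕ) then b else 1) = 1 := by
    intro j _
    rw [if_neg (by omega), if_neg (by omega)]
  rw [Finset.prod_congr rfl e1, Finset.prod_congr rfl e2, Finset.prod_const, Finset.prod_const_one,
    Finset.card_range]
  have e3 : (if (m : ℕ) + 0 < (m : ℕ) then a else if (m : ℕ) + 0 = (m : ℕ) then b else 1) = b := by
    rw [if_neg (by omega), if_pos (by omega)]
  rw [e3]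
  ring

lemma exp_indA {n : ℕ} {χ : ℝ} (x : Fin n → Bool) (m : Fin n) :
    ∑ y : Fin n → Bool, flipProb n χ x y * indA n x y m = χ * (1 - χ) ^ (m : ℕ) := by
  classical
  have hrepr : ∀ y : Fin n → Bool, flipProb n χ x y * indA n x y m
      = ∏ i : Fin n, ((if x i = y i then 1 - χ else χ) *
          (if (i : ℕ) < (m : ℕ) then (if y i = x i then 1 else 0)
           else if i = m then (if y i = x i then 0 else 1) else 1)) := by
    intro y
    rw [Finset.prod_mul_distrib]
    congr 1
    -- indA = product of indicators
    by_cases h : y m ≠ x m ∧ ∀ j : Fin n, j < m → y j = x j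
    · rw [indA, if_pos h]
      symm
      apply Finset.prod_eq_one
      intro i _
      rcases lt_trichotomy i m with h1 | h1 | h1
      · rw [if_pos (by exact h1), if_pos (h.2 i h1)]
      · subst h1
        rw [if_neg (lt_irrefl _), if_pos rfl, if_neg h.1]
      · have hv : (m : ℕ) < (i : ℕ) := h1
        rw [if_neg (by omega), if_neg (by exact fun hc => by subst hc; exact lt_irrefl _ h1)]
    · rw [indA, if_neg h]
      symm
      push_neg at h
      by_cases hym : y m = x m
      · apply Finset.prod_eq_zero (Finset.mem_univ m)
        rw [if_neg (lt_irrefl _), if_pos rfl, if_pos hym]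
      · obtain ⟨j, hj, hyj⟩ := h hym
        apply Finset.prod_eq_zero (Finset.mem_univ j)
        rw [if_pos (by exact hj), if_neg hyj]
  rw [Finset.sum_congr rfl (fun y _ => hrepr y)]
  rw [sum_prod_bool n (fun i b => (if x i = b then 1 - χ else χ) *
      (if (i : ℕ) < (m : ℕ) then (if b = x i then 1 else 0)
       else if i = m then (if b = x i then 0 else 1) else 1))]
  have hfac : ∀ i : Fin n,
      ((if x i = true then 1 - χ else χ) *
        (if (i : ℕ) < (m : ℕ) then (if true = x i then 1 else 0)
         else if i = m then (if true = x i then 0 else 1) else 1)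
      + (if x i = false then 1 - χ else χ) *
        (if (i : ℕ) < (m : ℕ) then (if false = x i then 1 else 0)
         else if i = m then (if false = x i then 0 else 1) else 1))
      = (if (i : ℕ) < (m : ℕ) then 1 - χ else if i = m then χ else 1) := by
    intro i
    rcases lt_trichotomy ((i : ℕ)) ((m : ℕ)) with h1 | h1 | h1
    · cases hx : x i <;> simp [h1, hx] <;> ring
    · have h2 : i = m := Fin.ext h1
      have h3 : ¬ (i : ℕ) < (m : ℕ) := by omega
      cases hx : x i <;> simp [h2, h3, hx] <;> ring
    · have h2 : ¬ i = m := fun hc => by rw [hc] at h1; exact lt_irrefl _ h1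
      have h3 : ¬ (i : ℕ) < (m : ℕ) := by omega
      cases hx : x i <;> simp [h2, h3, hx] <;> ring
  rw [Finset.prod_congr rfl (fun i _ => hfac i), prod_piecewise n m (1 - χ) χ]

lemma prod_piecewise2 (n : ℕ) (m j : Fin n) (hmj : m < j) (a b c : ℝ) :
    ∏ i : Fin n, ((if (i : ℕ) < (m : ℕ) then a else if i = m then b else 1) *
      (if i = j then c else 1)) = b * a ^ (m : ℕ) * c := by
  rw [Finset.prod_mul_distrib, prod_piecewise n m a b]
  have : ∏ i : Fin n, (if i = j then c else 1) = c := by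
    rw [Finset.prod_ite_eq' Finset.univ j (fun _ => c)]
    simp
  rw [this]

lemma exp_indA_flip {n : ℕ} {χ : ℝ} (x : Fin n → Bool) (m j : Fin n) (hmj : m < j) :
    ∑ y : Fin n → Bool, flipProb n χ x y * (indA n x y m * (if y j = x j then 0 else 1))
      = χ ^ 2 * (1 - χ) ^ (m : ℕ) := by
  classical
  have hmj' : (m : ℕ) < (j : ℕ) := hmj
  have hrepr : ∀ y : Fin n → Bool, flipProb n χ x y * (indA n x y m * (if y j = x j then 0 else 1))
      = ∏ i : Fin n, ((if x i = y i then 1 - χ else χ) *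
          ((if (i : ℕ) < (m : ℕ) then (if y i = x i then 1 else 0)
             else if i = m then (if y i = x i then 0 else 1) else 1) *
           (if i = j then (if y i = x i then 0 else 1) else 1))) := by
    intro y
    rw [Finset.prod_mul_distrib, Finset.prod_mul_distrib]
    congr 1
    congr 1
    · -- indA as a product
      by_cases h : y m ≠ x m ∧ ∀ j' : Fin n, j' < m → y j' = x j'
      · rw [indA, if_pos h]
        symm
        apply Finset.prod_eq_one
        intro i _
        rcases lt_trichotomy i m with h1 | h1 | h1
        · rw [if_pos (by exact h1), if_pos (h.2 i h1)]
        · subst h1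
          rw [if_neg (lt_irrefl _), if_pos rfl, if_neg h.1]
        · have hv : (m : ℕ) < (i : ℕ) := h1
          rw [if_neg (by omega), if_neg (by exact fun hc => by subst hc; exact lt_irrefl _ h1)]
      · rw [indA, if_neg h]
        symm
        push_neg at h
        by_cases hym : y m = x m
        · apply Finset.prod_eq_zero (Finset.mem_univ m)
          rw [if_neg (lt_irrefl _), if_pos rfl, if_pos hym]
        · obtain ⟨j', hj', hyj⟩ := h hym
          apply Finset.prod_eq_zero (Finset.mem_univ j')
          rw [if_pos (by exact hj'), if_neg hyj]
    · -- flip indicator at j as a product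
      symm
      rw [Finset.prod_ite_eq' Finset.univ j (fun i => if y i = x i then 0 else 1)]
      simp
  rw [Finset.sum_congr rfl (fun y _ => hrepr y)]
  rw [sum_prod_bool n (fun i b => (if x i = b then 1 - χ else χ) *
      ((if (i : ℕ) < (m : ℕ) then (if b = x i then 1 else 0)
         else if i = m then (if b = x i then 0 else 1) else 1) *
       (if i = j then (if b = x i then 0 else 1) else 1)))]
  have hfac : ∀ i : Fin n,
      ((if x i = true then 1 - χ else χ) *
        ((if (i : ℕ) < (m : ℕ) then (if true = x i then 1 else 0)
           else if i = m then (if true = x i then 0 else 1) else 1) *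
         (if i = j then (if true = x i then 0 else 1) else 1))
      + (if x i = false then 1 - χ else χ) *
        ((if (i : ℕ) < (m : ℕ) then (if false = x i then 1 else 0)
           else if i = m then (if false = x i then 0 else 1) else 1) *
         (if i = j then (if false = x i then 0 else 1) else 1)))
      = (if (i : ℕ) < (m : ℕ) then 1 - χ else if i = m then χ else 1) *
        (if i = j then χ else 1) := by
    intro i
    have hjm : ¬ j = m := fun hc => by rw [hc] at hmj; exact lt_irrefl _ hmj
    have hjv : ¬ (j : ℕ) < (m : ℕ) := by omega
    by_cases hij : i = j
    · subst hij
      have h2 : ¬ i = m := hjm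
      have h3 : ¬ (i : ℕ) < (m : ℕ) := hjv
      cases hx : x i <;> simp [h2, h3, hx] <;> ring
    · rcases lt_trichotomy ((i : ℕ)) ((m : ℕ)) with h1 | h1 | h1
      · cases hx : x i <;> simp [h1, hx, hij] <;> ring
      · have h2 : i = m := Fin.ext h1
        have h3 : ¬ (i : ℕ) < (m : ℕ) := by omega
        have hmj2 : ¬ m = j := fun hc => hjm hc.symm
        cases hx : x i <;> simp [h2, h3, hx, hij, hmj2] <;> ring
      · have h2 : ¬ i = m := fun hc => by rw [hc] at h1; exact lt_irrefl _ h1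
        have h3 : ¬ (i : ℕ) < (m : ℕ) := by omega
        cases hx : x i <;> simp [h2, h3, hx, hij] <;> ring
  rw [Finset.prod_congr rfl (fun i _ => hfac i), prod_piecewise2 n m j hmj (1 - χ) χ χ]
  ring

lemma geom_wt_bound (n k : ℕ) (hkn : k ≤ n) (χ : ℝ) (hχ : 0 < χ) (m : Fin n) (hmk : (m : ℕ) < k) :
    χ * ∑ j ∈ univ.filter (fun j : Fin n => m < j ∧ (j : ℕ) < k), wt k χ (j : ℕ)
      ≤ wt k χ (m : ℕ) / 2 := by
  classical
  have hre : ∑ j ∈ univ.filter (fun j : Fin n => m < j ∧ (j : ℕ) < k), wt k χ (j : ℕ)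
      = ∑ t ∈ range (k - 1 - (m : ℕ)), (1 + 2 * χ) ^ t := by
    apply Finset.sum_nbij' (i := fun j : Fin n => k - 1 - (j : ℕ))
      (j := fun t : ℕ => (⟨k - 1 - t, by omega⟩ : Fin n))
    · intro a ha
      simp only [Finset.mem_filter, Finset.mem_univ, true_and] at ha
      obtain ⟨h1, h2⟩ := ha
      have h1' : (m : ℕ) < (a : ℕ) := h1
      simp only [Finset.mem_range]
      omega
    · intro t ht
      simp only [Finset.mem_range] at ht
      simp only [Finset.mem_filter, Finset.mem_univ, true_and]
      constructor
      · rw [Fin.lt_def]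
        show (m : ℕ) < k - 1 - t
        omega
      · show k - 1 - t < k
        omega
    · intro a ha
      simp only [Finset.mem_filter, Finset.mem_univ, true_and] at ha
      have h1' : (m : ℕ) < (a : ℕ) := ha.1
      have := a.isLt
      apply Fin.ext
      simp only
      omega
    · intro t ht
      simp only [Finset.mem_range] at ht
      show k - 1 - (k - 1 - t) = t
      omega
    · intro a ha
      simp only [Finset.mem_filter, Finset.mem_univ, true_and] at ha
      rfl
  rw [hre, geom_sum_eq (by nlinarith : (1 : ℝ) + 2 * χ ≠ 1)]
  have hwm : wt k χ (m : ℕ) = (1 + 2 * χ) ^ (k - 1 - (m : ℕ)) := rfl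
  have hwpos : (1 : ℝ) ≤ (1 + 2 * χ) ^ (k - 1 - (m : ℕ)) := one_le_pow₀ (by linarith)
  have hsimp : (1 + 2 * χ - 1) = 2 * χ := by ring
  rw [hsimp, hwm]
  have heq : χ * (((1 + 2 * χ) ^ (k - 1 - (m : ℕ)) - 1) / (2 * χ))
      = ((1 + 2 * χ) ^ (k - 1 - (m : ℕ)) - 1) / 2 := by
    field_simp
  rw [heq]
  linarith

lemma gpot_eq_filter_sum (n k : ℕ) (χ : ℝ) (x : Fin n → Bool) :
    gpot n k χ x = ∑ m ∈ univ.filter (fun m : Fin n => (m : ℕ) < k ∧ x m = false), wt k χ (m : ℕ) := by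
  rw [gpot, Finset.sum_filter]

lemma drift_real (n k : ℕ) (hkn : k ≤ n) (hn : 0 < n) (χ : ℝ) (hχ0 : 0 < χ) (hχ1 : χ ≤ 1)
    (x : Fin n → Bool) :
    ∑ y : Fin n → Bool, flipProb n χ x y * gpot n k χ (select n x y)
      ≤ (1 - χ * (1 - χ) ^ (n - 1) / 2) * gpot n k χ x := by
  classical
  set Z := univ.filter (fun m : Fin n => (m : ℕ) < k ∧ x m = false) with hZ
  have step1 : ∑ y : Fin n → Bool, flipProb n χ x y * gpot n k χ (select n x y)
      ≤ ∑ y : Fin n → Bool, flipProb n χ x y * (gpot n k χ x -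
          ∑ m ∈ Z, indA n x y m * (wt k χ (m : ℕ) -
            ∑ j ∈ univ.filter (fun j : Fin n => m < j ∧ (j : ℕ) < k),
              (if y j = x j then 0 else 1) * wt k χ (j : ℕ))) :=
    Finset.sum_le_sum fun y _ => mul_le_mul_of_nonneg_left
      (pointwise_bound n k χ hχ0.le x y) (flipProb_nonneg hχ0.le hχ1 x y)
  have hm : ∀ m ∈ Z, ∑ y : Fin n → Bool, flipProb n χ x y *
        (indA n x y m * (wt k χ (m : ℕ) -
          ∑ j ∈ univ.filter (fun j : Fin n => m < j ∧ (j : ℕ) < k),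
            (if y j = x j then 0 else 1) * wt k χ (j : ℕ)))
      = χ * (1 - χ) ^ (m : ℕ) * wt k χ (m : ℕ)
        - χ ^ 2 * (1 - χ) ^ (m : ℕ) *
            ∑ j ∈ univ.filter (fun j : Fin n => m < j ∧ (j : ℕ) < k), wt k χ (j : ℕ) := by
    intro m _
    have expand : ∀ y : Fin n → Bool, flipProb n χ x y *
        (indA n x y m * (wt k χ (m : ℕ) -
          ∑ j ∈ univ.filter (fun j : Fin n => m < j ∧ (j : ℕ) < k),
            (if y j = x j then 0 else 1) * wt k χ (j : ℕ)))
        = (flipProb n χ x y * indA n x y m) * wt k χ (m : ℕ)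
          - ∑ j ∈ univ.filter (fun j : Fin n => m < j ∧ (j : ℕ) < k),
              (flipProb n χ x y * (indA n x y m * (if y j = x j then 0 else 1))) * wt k χ (j : ℕ) := by
      intro y
      have hstep : flipProb n χ x y *
          (indA n x y m * (wt k χ (m : ℕ) -
            ∑ j ∈ univ.filter (fun j : Fin n => m < j ∧ (j : ℕ) < k),
              (if y j = x j then 0 else 1) * wt k χ (j : ℕ)))
          = (flipProb n χ x y * indA n x y m) * wt k χ (m : ℕ)
            - (flipProb n χ x y * indA n x y m) *
                ∑ j ∈ univ.filter (fun j : Fin n => m < j ∧ (j : ℕ) < k),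
                  (if y j = x j then 0 else 1) * wt k χ (j : ℕ) := by ring
      rw [hstep, Finset.mul_sum]
      congr 1
      apply Finset.sum_congr rfl
      intro j _
      ring
    rw [Finset.sum_congr rfl (fun y _ => expand y), Finset.sum_sub_distrib,
      ← Finset.sum_mul, exp_indA x m, Finset.sum_comm]
    have hj : ∀ j ∈ univ.filter (fun j : Fin n => m < j ∧ (j : ℕ) < k),
        ∑ y : Fin n → Bool,
          (flipProb n χ x y * (indA n x y m * (if y j = x j then 0 else 1))) * wt k χ (j : ℕ)
        = χ ^ 2 * (1 - χ) ^ (m : ℕ) * wt k χ (j : ℕ) := by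
      intro j hjm
      simp only [Finset.mem_filter, Finset.mem_univ, true_and] at hjm
      rw [← Finset.sum_mul, exp_indA_flip x m j hjm.1]
    rw [Finset.sum_congr rfl hj, ← Finset.mul_sum]
  have step2 : ∑ y : Fin n → Bool, flipProb n χ x y * (gpot n k χ x -
        ∑ m ∈ Z, indA n x y m * (wt k χ (m : ℕ) -
          ∑ j ∈ univ.filter (fun j : Fin n => m < j ∧ (j : ℕ) < k),
            (if y j = x j then 0 else 1) * wt k χ (j : ℕ)))
      = gpot n k χ x - ∑ m ∈ Z, (χ * (1 - χ) ^ (m : ℕ) * wt k χ (m : ℕ)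
          - χ ^ 2 * (1 - χ) ^ (m : ℕ) *
              ∑ j ∈ univ.filter (fun j : Fin n => m < j ∧ (j : ℕ) < k), wt k χ (j : ℕ)) := by
    have e1 : ∀ y : Fin n → Bool, flipProb n χ x y * (gpot n k χ x -
        ∑ m ∈ Z, indA n x y m * (wt k χ (m : ℕ) -
          ∑ j ∈ univ.filter (fun j : Fin n => m < j ∧ (j : ℕ) < k),
            (if y j = x j then 0 else 1) * wt k χ (j : ℕ)))
        = flipProb n χ x y * gpot n k χ x -
          ∑ m ∈ Z, flipProb n χ x y * (indA n x y m * (wt k χ (m : ℕ) -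
            ∑ j ∈ univ.filter (fun j : Fin n => m < j ∧ (j : ℕ) < k),
              (if y j = x j then 0 else 1) * wt k χ (j : ℕ))) := by
      intro y
      rw [mul_sub, Finset.mul_sum]
    rw [Finset.sum_congr rfl (fun y _ => e1 y), Finset.sum_sub_distrib, ← Finset.sum_mul,
      sum_flipProb x, one_mul, Finset.sum_comm, Finset.sum_congr rfl hm]
  rw [step2] at step1
  refine le_trans step1 ?_
  -- now bound the subtracted sum from below
  have hlow : ∀ m ∈ Z, χ * (1 - χ) ^ (n - 1) / 2 * wt k χ (m : ℕ)
      ≤ χ * (1 - χ) ^ (m : ℕ) * wt k χ (m : ℕ)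
        - χ ^ 2 * (1 - χ) ^ (m : ℕ) *
            ∑ j ∈ univ.filter (fun j : Fin n => m < j ∧ (j : ℕ) < k), wt k χ (j : ℕ) := by
    intro m hmZ
    simp only [hZ, Finset.mem_filter, Finset.mem_univ, true_and] at hmZ
    have hgeom := geom_wt_bound n k hkn χ hχ0 m hmZ.1
    have hpow : (1 - χ) ^ (n - 1) ≤ (1 - χ) ^ (m : ℕ) := by
      apply pow_le_pow_of_le_one (by linarith) (by linarith)
      have := m.isLt
      omega
    have hpw0 : (0 : ℝ) ≤ (1 - χ) ^ (m : ℕ) := pow_nonneg (by linarith) _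
    have hw0 : (0 : ℝ) ≤ wt k χ (m : ℕ) := wt_nonneg hχ0.le _
    have key : χ * (1 - χ) ^ (m : ℕ) * (wt k χ (m : ℕ) / 2)
        ≤ χ * (1 - χ) ^ (m : ℕ) * wt k χ (m : ℕ)
          - χ ^ 2 * (1 - χ) ^ (m : ℕ) *
              ∑ j ∈ univ.filter (fun j : Fin n => m < j ∧ (j : ℕ) < k), wt k χ (j : ℕ) := by
      have h1 : χ ^ 2 * (1 - χ) ^ (m : ℕ) *
            ∑ j ∈ univ.filter (fun j : Fin n => m < j ∧ (j : ℕ) < k), wt k χ (j : ℕ)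
          ≤ χ * (1 - χ) ^ (m : ℕ) * (wt k χ (m : ℕ) / 2) := by
        have := mul_le_mul_of_nonneg_left hgeom (mul_nonneg hχ0.le hpw0)
        calc χ ^ 2 * (1 - χ) ^ (m : ℕ) *
              ∑ j ∈ univ.filter (fun j : Fin n => m < j ∧ (j : ℕ) < k), wt k χ (j : ℕ)
            = (χ * (1 - χ) ^ (m : ℕ)) *
              (χ * ∑ j ∈ univ.filter (fun j : Fin n => m < j ∧ (j : ℕ) < k), wt k χ (j : ℕ)) := by
              ring
          _ ≤ (χ * (1 - χ) ^ (m : ℕ)) * (wt k χ (m : ℕ) / 2) := this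
      linarith
    refine le_trans ?_ key
    have := mul_le_mul_of_nonneg_right (mul_le_mul_of_nonneg_left hpow hχ0.le)
      (by linarith : (0:ℝ) ≤ wt k χ (m : ℕ) / 2)
    calc χ * (1 - χ) ^ (n - 1) / 2 * wt k χ (m : ℕ)
        = (χ * (1 - χ) ^ (n - 1)) * (wt k χ (m : ℕ) / 2) := by ring
      _ ≤ (χ * (1 - χ) ^ (m : ℕ)) * (wt k χ (m : ℕ) / 2) := this
      _ = χ * (1 - χ) ^ (m : ℕ) * (wt k χ (m : ℕ) / 2) := by ring
  have hsum_low : χ * (1 - χ) ^ (n - 1) / 2 * gpot n k χ x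
      ≤ ∑ m ∈ Z, (χ * (1 - χ) ^ (m : ℕ) * wt k χ (m : ℕ)
          - χ ^ 2 * (1 - χ) ^ (m : ℕ) *
              ∑ j ∈ univ.filter (fun j : Fin n => m < j ∧ (j : ℕ) < k), wt k χ (j : ℕ)) := by
    rw [gpot_eq_filter_sum n k χ x, ← hZ, Finset.mul_sum]
    exact Finset.sum_le_sum hlow
  linarith

/-- rearrangement: sum of kernel times a function -/
lemma stepKer_apply (n : ℕ) (χ : ℝ) (x : Fin n → Bool) (F : (Fin n → Bool) → ℝ≥0∞) :
    ∑ x' : Fin n → Bool, stepKer n χ x x' * F x'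
      = ∑ y : Fin n → Bool, ENNReal.ofReal (flipProb n χ x y) * F (select n x y) := by
  classical
  simp only [stepKer, Finset.sum_mul]
  rw [Finset.sum_comm]
  apply Finset.sum_congr rfl
  intro y _
  rw [Finset.sum_congr rfl (fun x' _ => by rw [mul_ite, mul_one, mul_zero, ite_mul, zero_mul] :
      ∀ x' ∈ univ, (ENNReal.ofReal (flipProb n χ x y) * if select n x y = x' then 1 else 0) * F x'
        = if select n x y = x' then ENNReal.ofReal (flipProb n χ x y) * F x' else 0)]
  rw [Finset.sum_ite_eq univ (select n x y)
    (fun x' => ENNReal.ofReal (flipProb n χ x y) * F x')]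
  simp

lemma stepKer_mass (n : ℕ) (χ : ℝ) (hχ0 : 0 ≤ χ) (hχ1 : χ ≤ 1) (x : Fin n → Bool) :
    ∑ x' : Fin n → Bool, stepKer n χ x x' = 1 := by
  have h := stepKer_apply n χ x (fun _ => 1)
  simp only [mul_one] at h
  rw [h, ← ENNReal.ofReal_sum_of_nonneg (fun y _ => flipProb_nonneg hχ0 hχ1 x y),
    sum_flipProb x, ENNReal.ofReal_one]

/-- general multiplicative-drift hitting time bound over a finite state space -/
lemma drift_hit {σ : Type*} [Fintype σ] (init : σ → ℝ≥0∞) (step : σ → σ → ℝ≥0∞) (A : Set σ)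
    (g : σ → ℝ) (hg0 : ∀ s, 0 ≤ g s) (hg1 : ∀ s, s ∉ A → 1 ≤ g s)
    (M : ℝ) (hM0 : 0 ≤ M) (hgM : ∀ s, g s ≤ M)
    (hinit : ∑ s, init s ≤ 1) (hstep : ∀ s, ∑ s', step s s' ≤ 1)
    (δ : ℝ) (hδ0 : 0 < δ) (hδ1 : δ ≤ 1)
    (hdrift : ∀ s, s ∉ A → ∑ s', step s s' * ENNReal.ofReal (g s')
        ≤ ENNReal.ofReal ((1 - δ) * g s))
    (t0 : ℕ) :
    hitTimeExp init step A ≤ (t0 : ℝ≥0∞) + ENNReal.ofReal ((1 - δ) ^ t0 * M / δ) := by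
  classical
  set al := alive init step A with hal
  have halA : ∀ t s, s ∈ A → al t s = 0 := by
    intro t s hs
    cases t <;> exact Set.indicator_of_notMem (by simp [hs]) _
  have hmass : ∀ t, ∑ s, al t s ≤ 1 := by
    intro t
    induction t with
    | zero =>
      refine le_trans (Finset.sum_le_sum fun s _ => ?_) hinit
      exact Set.indicator_le_self _ _ s
    | succ t ih =>
      have h1 : ∀ s', al (t + 1) s' ≤ ∑' s, al t s * step s s' := by
        intro s'
        exact Set.indicator_le_self _ _ s'
      calc ∑ s', al (t + 1) s' ≤ ∑ s', ∑' s, al t s * step s s' :=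
            Finset.sum_le_sum fun s' _ => h1 s'
        _ = ∑ s', ∑ s, al t s * step s s' := by
            apply Finset.sum_congr rfl; intro s' _; exact tsum_fintype _
        _ = ∑ s, al t s * ∑ s', step s s' := by
            rw [Finset.sum_comm]
            exact Finset.sum_congr rfl fun s _ => (Finset.mul_sum _ _ _).symm
        _ ≤ ∑ s, al t s * 1 :=
            Finset.sum_le_sum fun s _ => mul_le_mul_right (hstep s) _
        _ = ∑ s, al t s := by simp
        _ ≤ 1 := ih
  have hΦ : ∀ t, ∑ s, al t s * ENNReal.ofReal (g s)
      ≤ ENNReal.ofReal (1 - δ) ^ t * ENNReal.ofReal M := by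
    intro t
    induction t with
    | zero =>
      calc ∑ s, al 0 s * ENNReal.ofReal (g s)
          ≤ ∑ s, al 0 s * ENNReal.ofReal M :=
            Finset.sum_le_sum fun s _ => mul_le_mul_right (ENNReal.ofReal_le_ofReal (hgM s)) _
        _ = (∑ s, al 0 s) * ENNReal.ofReal M := (Finset.sum_mul _ _ _).symm
        _ ≤ 1 * ENNReal.ofReal M := mul_le_mul_left (hmass 0) _
        _ = ENNReal.ofReal (1 - δ) ^ 0 * ENNReal.ofReal M := by simp
    | succ t ih =>
      have key : ∀ s, al t s * (∑ s', step s s' * ENNReal.ofReal (g s'))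
          ≤ al t s * ENNReal.ofReal ((1 - δ) * g s) := by
        intro s
        by_cases hs : s ∈ A
        · rw [halA t s hs]
          simp
        · exact mul_le_mul_right (hdrift s hs) _
      calc ∑ s', al (t + 1) s' * ENNReal.ofReal (g s')
          ≤ ∑ s', (∑' s, al t s * step s s') * ENNReal.ofReal (g s') :=
            Finset.sum_le_sum fun s' _ =>
              mul_le_mul_left (Set.indicator_le_self _ _ s') _
        _ = ∑ s', (∑ s, al t s * step s s') * ENNReal.ofReal (g s') := by
            apply Finset.sum_congr rfl; intro s' _; rw [tsum_fintype]
        _ = ∑ s', ∑ s, (al t s * step s s') * ENNReal.ofReal (g s') := by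
            apply Finset.sum_congr rfl
            intro s' _
            exact Finset.sum_mul _ _ _
        _ = ∑ s, al t s * (∑ s', step s s' * ENNReal.ofReal (g s')) := by
            rw [Finset.sum_comm]
            apply Finset.sum_congr rfl
            intro s _
            rw [Finset.mul_sum]
            apply Finset.sum_congr rfl
            intro s' _
            rw [mul_assoc]
        _ ≤ ∑ s, al t s * ENNReal.ofReal ((1 - δ) * g s) :=
            Finset.sum_le_sum fun s _ => key s
        _ = ENNReal.ofReal (1 - δ) * ∑ s, al t s * ENNReal.ofReal (g s) := by
            rw [Finset.mul_sum]
            apply Finset.sum_congr rfl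
            intro s _
            rw [ENNReal.ofReal_mul (by linarith)]
            ring
        _ ≤ ENNReal.ofReal (1 - δ) * (ENNReal.ofReal (1 - δ) ^ t * ENNReal.ofReal M) :=
            mul_le_mul_right ih _
        _ = ENNReal.ofReal (1 - δ) ^ (t + 1) * ENNReal.ofReal M := by ring
  have hPt : ∀ t, ∑ s, al t s ≤ ENNReal.ofReal (1 - δ) ^ t * ENNReal.ofReal M := by
    intro t
    refine le_trans (Finset.sum_le_sum fun s _ => ?_) (hΦ t)
    by_cases hs : s ∈ A
    · rw [halA t s hs]; simp
    · have : (1 : ℝ≥0∞) ≤ ENNReal.ofReal (g s) := by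
        rw [← ENNReal.ofReal_one]
        exact ENNReal.ofReal_le_ofReal (hg1 s hs)
      exact le_mul_of_one_le_right' this
  set r := ENNReal.ofReal (1 - δ) with hrdef
  have hδ' : (0 : ℝ) ≤ 1 - δ := by linarith
  have hr : (1 : ℝ≥0∞) - r = ENNReal.ofReal δ := by
    rw [hrdef, ← ENNReal.ofReal_one, ← ENNReal.ofReal_sub _ hδ']
    norm_num
  have hsplit : ∑ i ∈ range t0, (∑ s, al i s) + ∑' i : ℕ, (∑ s, al (i + t0) s)
      = ∑' i : ℕ, (∑ s, al i s) :=
    ENNReal.summable.sum_add_tsum_nat_add'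
  calc hitTimeExp init step A = ∑' t : ℕ, (∑ s, al t s) := by
        unfold hitTimeExp
        apply tsum_congr
        intro t
        exact tsum_fintype _
    _ = ∑ i ∈ range t0, (∑ s, al i s) + ∑' i : ℕ, (∑ s, al (i + t0) s) := hsplit.symm
    _ ≤ ∑ i ∈ range t0, 1 + ∑' i : ℕ, r ^ (i + t0) * ENNReal.ofReal M :=
        add_le_add (Finset.sum_le_sum fun i _ => hmass i)
          (ENNReal.tsum_le_tsum fun i => hPt (i + t0))
    _ = (t0 : ℝ≥0∞) + (∑' i : ℕ, r ^ i) * (r ^ t0 * ENNReal.ofReal M) := by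
        congr 1
        · simp
        · rw [← ENNReal.tsum_mul_right]
          apply tsum_congr
          intro i
          rw [pow_add]
          ring
    _ = (t0 : ℝ≥0∞) + (1 - r)⁻¹ * (r ^ t0 * ENNReal.ofReal M) := by
        rw [ENNReal.tsum_geometric]
    _ = (t0 : ℝ≥0∞) + ENNReal.ofReal ((1 - δ) ^ t0 * M / δ) := by
        congr 1
        rw [hr, hrdef, ← ENNReal.ofReal_pow hδ', ← ENNReal.ofReal_mul (pow_nonneg hδ' t0),
          ← ENNReal.ofReal_inv_of_pos hδ0, ← ENNReal.ofReal_mul (by positivity)]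
        rw [div_eq_mul_inv]
        ring_nf

set_option maxHeartbeats 1000000 in
/-- Fixed-target upper bound for the standard (1+1) EA with mutation rate `χ = 1/n`
on BinVal (`n ≥ 3`, `2 ≤ k ≤ n`): `E[T_k] ≤ 4e·n·(1 + ln(2k))`,
i.e. `E[T_k] = O(n log k)`. -/
theorem ea_standard_fixed_target_upper
    (n k : ℕ) (hn : 3 ≤ n) (hk2 : 2 ≤ k) (hkn : k ≤ n) :
    hitTimeExp (uniformInit n) (stepKer n (1 / n)) (firstKOnes n k) ≤
      ENNReal.ofReal (4 * Real.exp 1 * n * (1 + Real.log (2 * k))) := by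
  classical
  have hn0 : 0 < n := by omega
  have hnR : (3 : ℝ) ≤ n := by exact_mod_cast hn
  have hnR0 : (0 : ℝ) < n := by linarith
  set χ : ℝ := 1 / n with hχdef
  have hχ0 : 0 < χ := by positivity
  have hχ1 : χ ≤ 1 := by
    rw [hχdef, div_le_one hnR0]; linarith
  set e : ℝ := Real.exp 1 with hedef
  have he : (2.7182818283 : ℝ) < e := Real.exp_one_gt_d9
  have he0 : 0 < e := by linarith
  set δ : ℝ := 1 / (2 * e * n) with hδdef
  have hδ0 : 0 < δ := by positivity
  have hδ1 : δ ≤ 1 := by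
    rw [hδdef, div_le_one (by positivity)]
    nlinarith
  set M : ℝ := k * Real.exp 2 with hMdef
  have hkR : (2 : ℝ) ≤ k := by exact_mod_cast hk2
  have hknR : (k : ℝ) ≤ n := by exact_mod_cast hkn
  have hM0 : 0 ≤ M := by positivity
  set g : (Fin n → Bool) → ℝ := gpot n k χ with hgdef
  -- drift constant of drift_real dominates δ
  have hee : (1 - χ) ^ (n - 1) ≥ e⁻¹ := by
    have hn1 : (1 : ℝ) ≤ (n : ℝ) - 1 := by linarith
    have hne1 : ((n : ℝ) - 1) ≠ 0 := by linarith
    have h1 : (1 + 1 / ((n : ℝ) - 1)) ^ (n - 1) ≤ e := by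
      have hle : 1 + 1 / ((n : ℝ) - 1) ≤ Real.exp (1 / ((n : ℝ) - 1)) := by
        have := Real.add_one_le_exp (1 / ((n : ℝ) - 1))
        linarith
      calc (1 + 1 / ((n : ℝ) - 1)) ^ (n - 1)
          ≤ Real.exp (1 / ((n : ℝ) - 1)) ^ (n - 1) :=
            pow_le_pow_left₀ (by positivity) hle _
        _ = Real.exp ((n - 1 : ℕ) * (1 / ((n : ℝ) - 1))) := by
            rw [← Real.exp_nat_mul]
        _ = e := by
            rw [hedef]
            congr 1
            have hcast : ((n - 1 : ℕ) : ℝ) = (n : ℝ) - 1 := by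
              have : (1 : ℕ) ≤ n := by omega
              push_cast [this]
              ring
            rw [hcast]
            field_simp
    have hinv : (1 - χ) = (1 + 1 / ((n : ℝ) - 1))⁻¹ := by
      rw [hχdef, show (1 : ℝ) + 1 / ((n : ℝ) - 1) = n / ((n : ℝ) - 1) by field_simp; ring, inv_div]
      field_simp
    have hb0 : (0 : ℝ) < (1 + 1 / ((n : ℝ) - 1)) ^ (n - 1) := by positivity
    rw [hinv, inv_pow]
    exact inv_anti₀ hb0 h1
  have hδle : δ ≤ χ * (1 - χ) ^ (n - 1) / 2 := by
    have h2 : χ * e⁻¹ / 2 ≤ χ * (1 - χ) ^ (n - 1) / 2 := by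
      have := mul_le_mul_of_nonneg_left hee hχ0.le
      linarith
    have h3 : δ = χ * e⁻¹ / 2 := by
      rw [hδdef, hχdef]
      field_simp
    linarith
  -- drift hypothesis for the kernel
  have hdrift : ∀ s, s ∉ firstKOnes n k →
      ∑ s' : Fin n → Bool, stepKer n χ s s' * ENNReal.ofReal (g s')
        ≤ ENNReal.ofReal ((1 - δ) * g s) := by
    intro s _
    rw [stepKer_apply n χ s (fun x' => ENNReal.ofReal (g x'))]
    have hsum : ∑ y : Fin n → Bool, ENNReal.ofReal (flipProb n χ s y) *
          ENNReal.ofReal (g (select n s y))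
        = ENNReal.ofReal (∑ y : Fin n → Bool, flipProb n χ s y * g (select n s y)) := by
      rw [ENNReal.ofReal_sum_of_nonneg (fun y _ =>
        mul_nonneg (flipProb_nonneg hχ0.le hχ1 s y) (gpot_nonneg hχ0.le _))]
      apply Finset.sum_congr rfl
      intro y _
      rw [ENNReal.ofReal_mul (flipProb_nonneg hχ0.le hχ1 s y)]
    rw [hsum]
    apply ENNReal.ofReal_le_ofReal
    calc ∑ y : Fin n → Bool, flipProb n χ s y * g (select n s y)
        ≤ (1 - χ * (1 - χ) ^ (n - 1) / 2) * g s :=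
          drift_real n k hkn hn0 χ hχ0 hχ1 s
      _ ≤ (1 - δ) * g s := by
          apply mul_le_mul_of_nonneg_right (by linarith) (gpot_nonneg hχ0.le s)
  -- lower bound off the target
  have hg1 : ∀ s, s ∉ firstKOnes n k → 1 ≤ g s := by
    intro s hs
    simp only [firstKOnes, Set.mem_setOf_eq, not_forall] at hs
    obtain ⟨i, hik, hsi⟩ := hs
    have hsif : s i = false := by
      revert hsi; cases s i <;> simp
    have hterm : (1 : ℝ) ≤ (if (i : ℕ) < k ∧ s i = false then wt k χ (i : ℕ) else 0) := by
      rw [if_pos ⟨hik, hsif⟩]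
      exact one_le_wt hχ0.le _
    have hle2 : (if (i : ℕ) < k ∧ s i = false then wt k χ (i : ℕ) else 0)
        ≤ ∑ j : Fin n, (if (j : ℕ) < k ∧ s j = false then wt k χ (j : ℕ) else 0) :=
      Finset.single_le_sum (f := fun j : Fin n =>
        if (j : ℕ) < k ∧ s j = false then wt k χ (j : ℕ) else 0) (fun j _ => by
          split
          · exact wt_nonneg hχ0.le _
          · exact le_refl 0) (Finset.mem_univ i)
    exact le_trans hterm hle2
  -- upper bound M
  have hwle : ∀ j : ℕ, wt k χ j ≤ Real.exp 2 := by
    intro j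
    have hb : 1 + 2 * χ ≤ Real.exp (2 / n) := by
      have := Real.add_one_le_exp (2 / (n : ℝ))
      rw [hχdef]
      have h2n : 2 * (1 / (n : ℝ)) = 2 / n := by ring
      rw [h2n]
      linarith
    have hc : ((k - 1 - j : ℕ) : ℝ) ≤ (n : ℝ) := by
      exact_mod_cast (by omega : k - 1 - j ≤ n)
    calc wt k χ j = (1 + 2 * χ) ^ (k - 1 - j) := rfl
      _ ≤ Real.exp (2 / n) ^ (k - 1 - j) := pow_le_pow_left₀ (by positivity) hb _
      _ = Real.exp (((k - 1 - j : ℕ) : ℝ) * (2 / n)) := (Real.exp_nat_mul _ _).symm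
      _ ≤ Real.exp 2 := by
          apply Real.exp_le_exp.mpr
          have h1 : ((k - 1 - j : ℕ) : ℝ) * (2 / n) ≤ (n : ℝ) * (2 / n) :=
            mul_le_mul_of_nonneg_right hc (by positivity)
          have h2 : (n : ℝ) * (2 / n) = 2 := by field_simp
          linarith
  have hgM : ∀ s, g s ≤ M := by
    intro s
    have hcard : ((univ.filter (fun i : Fin n => (i : ℕ) < k)).card : ℝ) ≤ (k : ℝ) := by
      have : (univ.filter (fun i : Fin n => (i : ℕ) < k)).card ≤ (Finset.range k).card := by
        apply Finset.card_le_card_of_injOn (fun i : Fin n => (i : ℕ))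
        · intro i hi
          simpa using hi
        · exact fun a _ b _ hab => Fin.ext hab
      simpa using (by exact_mod_cast this : ((univ.filter (fun i : Fin n => (i : ℕ) < k)).card : ℝ) ≤ ((Finset.range k).card : ℝ))
    calc g s ≤ ∑ i : Fin n, (if (i : ℕ) < k then Real.exp 2 else 0) := by
          apply Finset.sum_le_sum
          intro i _
          split_ifs with h1 h2
          · exact hwle _
          · exact absurd h1.1 h2
          · positivity
          · exact le_refl 0
      _ = ((univ.filter (fun i : Fin n => (i : ℕ) < k)).card : ℝ) * Real.exp 2 := by
          rw [← Finset.sum_filter, Finset.sum_const, nsmul_eq_mul]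
      _ ≤ (k : ℝ) * Real.exp 2 := mul_le_mul_of_nonneg_right hcard (by positivity)
      _ = M := by rw [hMdef]
  -- initial mass
  have hinit : ∑ s : Fin n → Bool, uniformInit n s ≤ 1 := by
    have hcard : (Finset.univ : Finset (Fin n → Bool)).card = 2 ^ n := by
      rw [Finset.card_univ, Fintype.card_fun]
      simp
    have hval : ∑ _s : Fin n → Bool, (2 : ℝ≥0∞)⁻¹ ^ n = 1 := by
      rw [Finset.sum_const, hcard, nsmul_eq_mul]
      rw [← ENNReal.inv_pow]
      push_cast
      exact ENNReal.mul_inv_cancel (pow_ne_zero _ (by norm_num)) (ENNReal.pow_ne_top (by norm_num))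
    exact le_of_eq hval
  set t0 : ℕ := ⌈2 * e * n * (2 + Real.log k)⌉₊ with ht0def
  have hmain := drift_hit (uniformInit n) (stepKer n χ) (firstKOnes n k) g
    (fun s => gpot_nonneg hχ0.le s) hg1 M hM0 hgM hinit
    (fun s => le_of_eq (stepKer_mass n χ hχ0.le hχ1 s)) δ hδ0 hδ1 hdrift t0
  have hlogk0 : 0 ≤ Real.log k := Real.log_nonneg (by linarith)
  have harg0 : (0 : ℝ) ≤ 2 * e * n * (2 + Real.log k) := by positivity
  have ht0le : (t0 : ℝ) ≤ 2 * e * n * (2 + Real.log k) + 1 := (Nat.ceil_lt_add_one harg0).le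
  have ht0ge : 2 * e * n * (2 + Real.log k) ≤ (t0 : ℝ) := Nat.le_ceil _
  -- bound the tail term
  have hterm2 : (1 - δ) ^ t0 * M / δ ≤ 2 * e * n := by
    have hexp1 : 1 - δ ≤ Real.exp (-δ) := by
      have := Real.add_one_le_exp (-δ)
      linarith
    have hδt0 : 2 + Real.log k ≤ δ * t0 := by
      have heq : δ * (2 * e * n * (2 + Real.log k)) = 2 + Real.log k := by
        rw [hδdef]
        field_simp
      calc 2 + Real.log k = δ * (2 * e * n * (2 + Real.log k)) := heq.symm
        _ ≤ δ * t0 := mul_le_mul_of_nonneg_left ht0ge hδ0.le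
    have hfinal : (1 - δ) ^ t0 ≤ Real.exp (-2) / k := by
      calc (1 - δ) ^ t0 ≤ Real.exp (-δ) ^ t0 := pow_le_pow_left₀ (by linarith) hexp1 _
        _ = Real.exp ((t0 : ℝ) * (-δ)) := (Real.exp_nat_mul _ _).symm
        _ ≤ Real.exp (-(2 + Real.log k)) := by
            apply Real.exp_le_exp.mpr
            nlinarith
        _ = Real.exp (-2) / k := by
            rw [show -(2 + Real.log k) = (-2) + (-(Real.log k)) by ring, Real.exp_add,
              Real.exp_neg (Real.log k), Real.exp_log (by linarith : (0 : ℝ) < k)]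
            rw [div_eq_mul_inv]
    have hMδpos : (0 : ℝ) ≤ M / δ := by positivity
    have hMδ : M / δ = (k : ℝ) * Real.exp 2 * (2 * e * n) := by
      rw [hMdef, hδdef]
      field_simp
      try ring
    calc (1 - δ) ^ t0 * M / δ = (1 - δ) ^ t0 * (M / δ) := by ring
      _ ≤ (Real.exp (-2) / k) * (M / δ) := mul_le_mul_of_nonneg_right hfinal hMδpos
      _ = (Real.exp (-2) / k) * ((k : ℝ) * Real.exp 2 * (2 * e * n)) := by rw [hMδ]
      _ = 2 * e * n := by
          rw [Real.exp_neg]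
          have hk0 : (k : ℝ) ≠ 0 := by linarith
          have hexp2 : Real.exp 2 ≠ 0 := (Real.exp_pos 2).ne'
          field_simp
  refine le_trans hmain ?_
  have hcast : (t0 : ℝ≥0∞) = ENNReal.ofReal (t0 : ℝ) := (ENNReal.ofReal_natCast t0).symm
  rw [hcast]
  calc ENNReal.ofReal (t0 : ℝ) + ENNReal.ofReal ((1 - δ) ^ t0 * M / δ)
      ≤ ENNReal.ofReal (2 * e * n * (2 + Real.log k) + 1) + ENNReal.ofReal (2 * e * n) :=
        add_le_add (ENNReal.ofReal_le_ofReal ht0le) (ENNReal.ofReal_le_ofReal hterm2)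
    _ = ENNReal.ofReal (2 * e * n * (2 + Real.log k) + 1 + 2 * e * n) :=
        (ENNReal.ofReal_add (by positivity) (by positivity)).symm
    _ ≤ ENNReal.ofReal (4 * Real.exp 1 * n * (1 + Real.log (2 * k))) := by
        apply ENNReal.ofReal_le_ofReal
        rw [← hedef]
        have hlog2k : Real.log (2 * (k : ℝ)) = Real.log 2 + Real.log k :=
          Real.log_mul (by norm_num) (by linarith)
        rw [hlog2k]
        have hl2 : (0.6931471803 : ℝ) < Real.log 2 := Real.log_two_gt_d9
        have hlk : Real.log 2 ≤ Real.log k := Real.log_le_log (by norm_num) (by linarith)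
        have hen : (8 : ℝ) ≤ e * n := by nlinarith
        nlinarith [mul_nonneg (by positivity : (0 : ℝ) ≤ e * n) (sub_nonneg.mpr hlk),
          mul_nonneg (by positivity : (0 : ℝ) ≤ e * n)
            (by linarith : (0 : ℝ) ≤ Real.log 2 - 0.6931471803)]

end
end

section
/- Let n ∈ ℕ with n ≥ 2 and let k ∈ ℕ with 2 ≤ k ≤ n. For the standard (1+1) EA with mutation rate χ = 1/n on BinVal, the expected number of iterations until the first k bits are all set to 1 satisfies E[T_k] ≥ (1/2)·(n − 1)·ln(k)·(1 − e^{−1/2}); in particular E[T_k] = Ω(n log k). -/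
open scoped BigOperators ENNReal

noncomputable section

namespace EALower

open Finset

/-- generic exchange: sum over boolean vectors of a product = product of bit-sums -/
lemma sum_pi_bool {n : ℕ} (F : Fin n → Bool → ℝ≥0∞) :
    ∑ y : Fin n → Bool, ∏ i, F i (y i) = ∏ i, (F i true + F i false) := by
  classical
  calc ∑ y : Fin n → Bool, ∏ i, F i (y i)
      = ∑ y ∈ Fintype.piFinset (fun _ : Fin n => (univ : Finset Bool)), ∏ i, F i (y i) := by
        rw [Fintype.piFinset_univ]
    _ = ∏ i, ∑ b ∈ (univ : Finset Bool), F i b := (Finset.prod_univ_sum _ _).symm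
    _ = ∏ i, (F i true + F i false) := by simp

lemma ite_funeq_prod {n : ℕ} (f g : Fin n → Bool) (u : Fin n → ℝ≥0∞) :
    (if f = g then ∏ i, u i else 0) = ∏ i, (if f i = g i then u i else 0) := by
  classical
  by_cases h : f = g
  · subst h; simp
  · rw [if_neg h]
    obtain ⟨i, hi⟩ : ∃ i, f i ≠ g i := by
      by_contra hc
      push_neg at hc
      exact h (funext hc)
    exact (Finset.prod_eq_zero (mem_univ i) (by rw [if_neg hi])).symm

variable (n k : ℕ) (χ : ℝ)

/-- initial mask: bits `i < k` with `x i = false`. -/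
def initm (x : Fin n → Bool) : Fin n → Bool := fun i => decide ((i : ℕ) < k) && !(x i)

/-- mask update: a bit survives if it was in the mask and not flipped by the proposal. -/
def updm (m x y : Fin n → Bool) : Fin n → Bool := fun i => m i && (y i == x i)

/-- joint distribution of (state, surviving-never-flipped-zero-bits mask). -/
def g : ℕ → (Fin n → Bool) → (Fin n → Bool) → ℝ≥0∞
  | 0 => fun x m => if m = initm n k x then uniformInit n x else 0
  | t + 1 => fun x' m' =>
      ∑ x : Fin n → Bool, ∑ m : Fin n → Bool, ∑ y : Fin n → Bool,
        g t x m * (ENNReal.ofReal (flipProb n χ x y) *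
          (if select n x y = x' ∧ m' = updm n m x y then 1 else 0))

lemma g_supp : ∀ t x m, g n k χ t x m ≠ 0 → ∀ i, m i = true → (i : ℕ) < k ∧ x i = false := by
  intro t
  induction t with
  | zero =>
    intro x m h i hi
    rw [g] at h
    by_cases hm : m = initm n k x
    · subst hm
      simp only [initm, Bool.and_eq_true, decide_eq_true_eq, Bool.not_eq_true'] at hi
      exact hi
    · simp [hm] at h
  | succ t ih =>
    intro x' m' h i hi
    rw [g] at h
    obtain ⟨x, -, h⟩ := Finset.exists_ne_zero_of_sum_ne_zero h
    obtain ⟨m, -, h⟩ := Finset.exists_ne_zero_of_sum_ne_zero h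
    obtain ⟨y, -, h⟩ := Finset.exists_ne_zero_of_sum_ne_zero h
    have hg : g n k χ t x m ≠ 0 := fun h0 => h (by rw [h0, zero_mul])
    have hite : (if select n x y = x' ∧ m' = updm n m x y then (1:ℝ≥0∞) else 0) ≠ 0 := by
      intro h0
      exact h (by rw [h0, mul_zero, mul_zero])
    rw [ne_eq, ite_eq_right_iff] at hite
    push_neg at hite
    obtain ⟨⟨hsel, hupd⟩, -⟩ := hite
    have hmi : m i = true ∧ y i = x i := by
      have h2 := congrFun hupd i
      rw [hi] at h2
      have h3 : (m i && (y i == x i)) = true := h2.symm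
      simpa [Bool.and_eq_true] using h3
    obtain ⟨hk', hx⟩ := ih x m hg i hmi.1
    refine ⟨hk', ?_⟩
    rw [← hsel]
    unfold select
    split
    · rw [hmi.2, hx]
    · exact hx

/-- mask transition weight. -/
def vv : Bool → Bool → ℝ≥0∞
  | true, true => ENNReal.ofReal (1 - χ)
  | true, false => ENNReal.ofReal χ
  | false, false => 1
  | false, true => 0

lemma W_eq (hχ0 : 0 ≤ χ) (hχ1 : χ ≤ 1) (x m m' : Fin n → Bool) :
    ∑ y : Fin n → Bool, ENNReal.ofReal (flipProb n χ x y) *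
        (if m' = updm n m x y then 1 else 0)
      = ∏ i : Fin n, vv χ (m i) (m' i) := by
  classical
  have hpq : ENNReal.ofReal (1 - χ) + ENNReal.ofReal χ = 1 := by
    rw [← ENNReal.ofReal_add (by linarith) hχ0]
    norm_num
  have hqp : ENNReal.ofReal χ + ENNReal.ofReal (1 - χ) = 1 := by
    rw [add_comm]; exact hpq
  have hstep : ∀ y : Fin n → Bool,
      ENNReal.ofReal (flipProb n χ x y) * (if m' = updm n m x y then 1 else 0)
      = ∏ i : Fin n, (ENNReal.ofReal (if x i = y i then 1 - χ else χ) *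
          (if m' i = (m i && (y i == x i)) then 1 else 0)) := by
    intro y
    rw [Finset.prod_mul_distrib]
    congr 1
    · rw [flipProb, ENNReal.ofReal_prod_of_nonneg]
      intro i _
      split <;> [linarith; exact hχ0]
    · have : (if m' = updm n m x y then (1:ℝ≥0∞) else 0)
          = if m' = updm n m x y then ∏ _i : Fin n, (1:ℝ≥0∞) else 0 := by simp
      rw [this, ite_funeq_prod]
      rfl
  rw [Finset.sum_congr rfl fun y _ => hstep y]
  rw [sum_pi_bool (fun i b => ENNReal.ofReal (if x i = b then 1 - χ else χ) *
      (if m' i = (m i && (b == x i)) then 1 else 0))]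
  apply Finset.prod_congr rfl
  intro i _
  cases hx : x i <;> cases hm : m i <;> cases hm' : m' i <;>
    simp [vv, hx, hm, hm', hpq, hqp]

def abit (t : ℕ) : ℝ≥0∞ := ENNReal.ofReal ((1 / 2) * (1 - χ) ^ t)
def bbit (t : ℕ) : ℝ≥0∞ := ENNReal.ofReal (1 - (1 / 2) * (1 - χ) ^ t)

def Fbit (t : ℕ) (i : Fin n) (c : Bool) : ℝ≥0∞ :=
  if (i : ℕ) < k then (if c then abit χ t else bbit χ t) else (if c then 0 else 1)

lemma half_eq : ENNReal.ofReal (1/2 : ℝ) = 2⁻¹ := by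
  rw [show (1/2:ℝ) = 2⁻¹ by norm_num, ENNReal.ofReal_inv_of_pos two_pos, ENNReal.ofReal_ofNat]

lemma hh_succ (hχ0 : 0 ≤ χ) (hχ1 : χ ≤ 1) (t : ℕ) (m' : Fin n → Bool) :
    (∑ x' : Fin n → Bool, g n k χ (t+1) x' m')
      = ∑ m : Fin n → Bool, (∑ x : Fin n → Bool, g n k χ t x m) *
          ∏ i : Fin n, vv χ (m i) (m' i) := by
  classical
  have step1 : (∑ x' : Fin n → Bool, g n k χ (t+1) x' m')
      = ∑ x : Fin n → Bool, ∑ m : Fin n → Bool, ∑ y : Fin n → Bool,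
          ∑ x' : Fin n → Bool,
          g n k χ t x m * (ENNReal.ofReal (flipProb n χ x y) *
            (if select n x y = x' ∧ m' = updm n m x y then 1 else 0)) := by
    simp only [g]
    rw [Finset.sum_comm]
    refine Finset.sum_congr rfl fun x _ => ?_
    rw [Finset.sum_comm]
    refine Finset.sum_congr rfl fun m _ => ?_
    rw [Finset.sum_comm]
  rw [step1]
  have step2 : ∀ x m y : Fin n → Bool,
      (∑ x' : Fin n → Bool,
        g n k χ t x m * (ENNReal.ofReal (flipProb n χ x y) *
          (if select n x y = x' ∧ m' = updm n m x y then 1 else 0)))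
      = g n k χ t x m * (ENNReal.ofReal (flipProb n χ x y) *
          (if m' = updm n m x y then 1 else 0)) := by
    intro x m y
    rw [← Finset.mul_sum, ← Finset.mul_sum]
    congr 1
    congr 1
    have : ∀ x' : Fin n → Bool,
        (if select n x y = x' ∧ m' = updm n m x y then (1:ℝ≥0∞) else 0)
        = if select n x y = x' then (if m' = updm n m x y then 1 else 0) else 0 := by
      intro x'; rw [ite_and]
    rw [Finset.sum_congr rfl fun x' _ => this x', Finset.sum_ite_eq]
    simp
  rw [Finset.sum_congr rfl fun x _ => Finset.sum_congr rfl fun m _ =>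
    Finset.sum_congr rfl fun y _ => step2 x m y]
  have step3 : ∀ x m : Fin n → Bool,
      (∑ y : Fin n → Bool, g n k χ t x m * (ENNReal.ofReal (flipProb n χ x y) *
          (if m' = updm n m x y then 1 else 0)))
      = g n k χ t x m * ∏ i : Fin n, vv χ (m i) (m' i) := by
    intro x m
    rw [← Finset.mul_sum, W_eq n χ hχ0 hχ1 x m m']
  rw [Finset.sum_congr rfl fun x _ => Finset.sum_congr rfl fun m _ => step3 x m]
  rw [Finset.sum_comm]
  exact Finset.sum_congr rfl fun m _ => (Finset.sum_mul _ _ _).symm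

lemma abit_succ (hχ1 : χ ≤ 1) (t : ℕ) :
    abit χ t * ENNReal.ofReal (1 - χ) = abit χ (t+1) := by
  have hα0 : (0:ℝ) ≤ (1/2) * (1-χ)^t :=
    mul_nonneg (by norm_num) (pow_nonneg (by linarith) t)
  rw [abit, abit, ← ENNReal.ofReal_mul hα0]
  congr 1; ring

lemma abit_zero : abit χ 0 = 2⁻¹ := by
  rw [abit, pow_zero, mul_one, half_eq]

lemma bbit_zero : bbit χ 0 = 2⁻¹ := by
  rw [bbit, pow_zero, mul_one, show (1:ℝ) - 1/2 = 1/2 by norm_num, half_eq]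

lemma bbit_succ (hχ0 : 0 ≤ χ) (hχ1 : χ ≤ 1) (t : ℕ) :
    abit χ t * ENNReal.ofReal χ + bbit χ t = bbit χ (t+1) := by
  have h1 : (0:ℝ) ≤ 1 - χ := by linarith
  have hα0 : (0:ℝ) ≤ (1/2) * (1-χ)^t := mul_nonneg (by norm_num) (pow_nonneg h1 t)
  have hα1 : (1/2) * (1-χ)^t ≤ 1 := by
    have := pow_le_one₀ h1 (by linarith : 1 - χ ≤ 1) (n := t)
    linarith
  rw [abit, bbit, bbit, ← ENNReal.ofReal_mul hα0,
    ← ENNReal.ofReal_add (mul_nonneg hα0 hχ0) (by linarith)]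
  congr 1; ring

lemma hh_eq (hχ0 : 0 ≤ χ) (hχ1 : χ ≤ 1) :
    ∀ t m, (∑ x : Fin n → Bool, g n k χ t x m) = ∏ i, Fbit n k χ t i (m i) := by
  intro t
  induction t with
  | zero =>
    intro m
    have hu : ∀ x : Fin n → Bool, g n k χ 0 x m
        = ∏ i : Fin n, (if m i = (decide ((i:ℕ) < k) && !(x i)) then 2⁻¹ else 0) := by
      intro x
      show (if m = initm n k x then uniformInit n x else 0) = _
      have h2 : uniformInit n x = ∏ _i : Fin n, (2:ℝ≥0∞)⁻¹ := by simp [uniformInit]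
      rw [h2, ite_funeq_prod m (initm n k x) (fun _ => 2⁻¹)]
      exact Finset.prod_congr rfl fun i _ => rfl
    rw [Finset.sum_congr rfl fun x _ => hu x,
      sum_pi_bool (fun i b => if m i = (decide ((i:ℕ) < k) && !b) then 2⁻¹ else 0)]
    refine Finset.prod_congr rfl fun i _ => ?_
    by_cases h : (i:ℕ) < k <;> cases hm : m i <;>
      simp [Fbit, abit_zero, bbit_zero, h, hm, ENNReal.inv_two_add_inv_two]
  | succ t ih =>
    intro m'
    rw [hh_succ n k χ hχ0 hχ1 t m',
      Finset.sum_congr rfl fun m _ => by rw [ih m]]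
    have : ∀ m : Fin n → Bool,
        (∏ i, Fbit n k χ t i (m i)) * ∏ i : Fin n, vv χ (m i) (m' i)
        = ∏ i : Fin n, (Fbit n k χ t i (m i) * vv χ (m i) (m' i)) :=
      fun m => (Finset.prod_mul_distrib).symm
    rw [Finset.sum_congr rfl fun m _ => this m,
      sum_pi_bool (fun i c => Fbit n k χ t i c * vv χ c (m' i))]
    refine Finset.prod_congr rfl fun i _ => ?_
    by_cases h : (i:ℕ) < k <;> cases hm' : m' i <;>
      simp [Fbit, vv, h, hm', abit_succ χ hχ1 t, bbit_succ χ hχ0 hχ1 t]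

lemma sum_g_le_alive :
    ∀ t x, ∑ m ∈ univ.erase (fun _ => false), g n k χ t x m
      ≤ alive (uniformInit n) (stepKer n χ) (firstKOnes n k) t x := by
  classical
  intro t
  induction t with
  | zero =>
    intro x
    rw [alive]
    by_cases hx : x ∈ firstKOnes n k
    · have h0 : ∀ m ∈ univ.erase (fun _ : Fin n => false), g n k χ 0 x m = 0 := by
        intro m hm
        rw [Finset.mem_erase] at hm
        show (if m = initm n k x then uniformInit n x else 0) = 0
        rw [if_neg]
        intro hme
        apply hm.1
        rw [hme]
        funext i
        by_cases hik : (i:ℕ) < k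
        · simp [initm, hik, hx i hik]
        · simp [initm, hik]
      rw [Finset.sum_eq_zero h0]
      exact zero_le
    · have hmem : x ∈ (firstKOnes n k)ᶜ := hx
      rw [Set.indicator_of_mem hmem]
      calc ∑ m ∈ univ.erase (fun _ : Fin n => false), g n k χ 0 x m
          ≤ ∑ m : Fin n → Bool, g n k χ 0 x m :=
            Finset.sum_le_sum_of_subset (Finset.erase_subset _ _)
        _ = uniformInit n x := by
            show (∑ m : Fin n → Bool, if m = initm n k x then uniformInit n x else 0) = _
            rw [Finset.sum_ite_eq' univ (initm n k x) (fun _ => uniformInit n x)]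
            simp
  | succ t ih =>
    intro x'
    rw [alive]
    by_cases hx' : x' ∈ firstKOnes n k
    · have h0 : ∀ m' ∈ univ.erase (fun _ : Fin n => false), g n k χ (t+1) x' m' = 0 := by
        intro m' hm'
        rw [Finset.mem_erase] at hm'
        by_contra hne
        obtain ⟨i, hi⟩ : ∃ i, m' i = true := by
          by_contra hc
          push_neg at hc
          exact hm'.1 (funext fun i => by simpa using hc i)
        obtain ⟨hik, hxi⟩ := g_supp n k χ (t+1) x' m' hne i hi
        rw [hx' i hik] at hxi
        exact Bool.noConfusion hxi
      rw [Finset.sum_eq_zero h0]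
      exact zero_le
    · have hmem : x' ∈ (firstKOnes n k)ᶜ := hx'
      rw [Set.indicator_of_mem hmem, tsum_fintype]
      set m₀ : Fin n → Bool := (fun _ => false) with hm₀
      have hswap : ∑ m' ∈ univ.erase m₀, g n k χ (t+1) x' m'
          = ∑ x : Fin n → Bool, ∑ m : Fin n → Bool, ∑ y : Fin n → Bool,
              ∑ m' ∈ univ.erase m₀,
              g n k χ t x m * (ENNReal.ofReal (flipProb n χ x y) *
                (if select n x y = x' ∧ m' = updm n m x y then 1 else 0)) := by
        simp only [g]
        rw [Finset.sum_comm]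
        refine Finset.sum_congr rfl fun x _ => ?_
        rw [Finset.sum_comm]
        refine Finset.sum_congr rfl fun m _ => ?_
        rw [Finset.sum_comm]
      rw [hswap]
      have key : ∀ x m y : Fin n → Bool,
          (∑ m' ∈ univ.erase m₀,
            g n k χ t x m * (ENNReal.ofReal (flipProb n χ x y) *
              (if select n x y = x' ∧ m' = updm n m x y then 1 else 0)))
          ≤ (g n k χ t x m * (ENNReal.ofReal (flipProb n χ x y) *
              (if select n x y = x' then 1 else 0))) * (if m = m₀ then 0 else 1) := by
        intro x m y
        rw [← Finset.mul_sum, ← Finset.mul_sum]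
        by_cases hm : m = m₀
        · have hz : ∀ m' ∈ univ.erase m₀,
              (if select n x y = x' ∧ m' = updm n m x y then (1:ℝ≥0∞) else 0) = 0 := by
            intro m' hm'
            rw [Finset.mem_erase] at hm'
            rw [if_neg]
            rintro ⟨-, h2⟩
            apply hm'.1
            rw [h2, hm]
            funext i
            simp [updm, hm₀]
          rw [Finset.sum_eq_zero hz]
          simp [hm]
        · rw [if_neg hm, mul_one]
          refine mul_le_mul_right (mul_le_mul_right ?_ _) _
          have hrw : ∀ m' : Fin n → Bool,
              (if select n x y = x' ∧ m' = updm n m x y then (1:ℝ≥0∞) else 0)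
              = if m' = updm n m x y then (if select n x y = x' then 1 else 0) else 0 := by
            intro m'
            by_cases h1 : select n x y = x' <;> by_cases h2 : m' = updm n m x y <;>
              simp [h1, h2]
          rw [Finset.sum_congr rfl fun m' _ => hrw m']
          rw [Finset.sum_ite_eq' (univ.erase m₀) (updm n m x y)
            (fun _ => if select n x y = x' then (1:ℝ≥0∞) else 0)]
          split <;> simp
      calc ∑ x : Fin n → Bool, ∑ m : Fin n → Bool, ∑ y : Fin n → Bool,
              ∑ m' ∈ univ.erase m₀,
              g n k χ t x m * (ENNReal.ofReal (flipProb n χ x y) *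
                (if select n x y = x' ∧ m' = updm n m x y then 1 else 0))
          ≤ ∑ x : Fin n → Bool, ∑ m : Fin n → Bool, ∑ y : Fin n → Bool,
              (g n k χ t x m * (ENNReal.ofReal (flipProb n χ x y) *
                (if select n x y = x' then 1 else 0))) * (if m = m₀ then 0 else 1) := by
            refine Finset.sum_le_sum fun x _ => Finset.sum_le_sum fun m _ =>
              Finset.sum_le_sum fun y _ => key x m y
        _ = ∑ x : Fin n → Bool, ∑ m : Fin n → Bool,
              (g n k χ t x m * stepKer n χ x x') * (if m = m₀ then 0 else 1) := by
            refine Finset.sum_congr rfl fun x _ => Finset.sum_congr rfl fun m _ => ?_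
            rw [← Finset.sum_mul, ← Finset.mul_sum, stepKer]
        _ = ∑ x : Fin n → Bool, ∑ m ∈ univ.erase m₀, g n k χ t x m * stepKer n χ x x' := by
            refine Finset.sum_congr rfl fun x _ => ?_
            rw [← Finset.add_sum_erase (univ : Finset (Fin n → Bool))
              (fun m => (g n k χ t x m * stepKer n χ x x') * (if m = m₀ then 0 else 1))
              (mem_univ m₀)]
            rw [if_pos rfl, mul_zero, zero_add]
            refine Finset.sum_congr rfl fun m hm => ?_
            rw [Finset.mem_erase] at hm
            rw [if_neg hm.1, mul_one]
        _ = ∑ x : Fin n → Bool,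
              (∑ m ∈ univ.erase m₀, g n k χ t x m) * stepKer n χ x x' := by
            refine Finset.sum_congr rfl fun x _ => (Finset.sum_mul _ _ _).symm
        _ ≤ ∑ x : Fin n → Bool,
              alive (uniformInit n) (stepKer n χ) (firstKOnes n k) t x * stepKer n χ x x' :=
            Finset.sum_le_sum fun x _ => mul_le_mul_left (ih x) _

lemma ab_one (hχ0 : 0 ≤ χ) (hχ1 : χ ≤ 1) (t : ℕ) : abit χ t + bbit χ t = 1 := by
  have h1 : (0:ℝ) ≤ 1 - χ := by linarith
  have hα0 : (0:ℝ) ≤ (1/2) * (1-χ)^t := mul_nonneg (by norm_num) (pow_nonneg h1 t)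
  have hα1 : (1/2) * (1-χ)^t ≤ 1 := by
    have := pow_le_one₀ h1 (by linarith : 1 - χ ≤ 1) (n := t)
    linarith
  rw [abit, bbit, ← ENNReal.ofReal_add hα0 (by linarith)]
  rw [show (1/2) * (1-χ)^t + (1 - (1/2) * (1-χ)^t) = (1:ℝ) by ring, ENNReal.ofReal_one]

lemma card_filter_lt (hkn : k ≤ n) : (univ.filter fun i : Fin n => (i:ℕ) < k).card = k := by
  have h : (univ.filter fun i : Fin n => (i:ℕ) < k) = Finset.map (Fin.castLEEmb hkn) univ := by
    ext i
    simp only [mem_filter, mem_univ, true_and, Finset.mem_map, Fin.castLEEmb_apply]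
    constructor
    · intro h; exact ⟨⟨i, h⟩, rfl⟩
    · rintro ⟨j, rfl⟩; exact j.2
  rw [h, Finset.card_map, card_univ, Fintype.card_fin]

lemma alive_lb (hχ0 : 0 ≤ χ) (hχ1 : χ ≤ 1) (hkn : k ≤ n) (t : ℕ) :
    1 - bbit χ t ^ k ≤ ∑ x : Fin n → Bool,
      alive (uniformInit n) (stepKer n χ) (firstKOnes n k) t x := by
  classical
  set m₀ : Fin n → Bool := (fun _ => false) with hm₀
  have h1 : ∑ m ∈ univ.erase m₀, (∑ x : Fin n → Bool, g n k χ t x m)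
      ≤ ∑ x : Fin n → Bool, alive (uniformInit n) (stepKer n χ) (firstKOnes n k) t x := by
    rw [Finset.sum_comm]
    exact Finset.sum_le_sum fun x _ => sum_g_le_alive n k χ t x
  have h2 : ∑ m ∈ univ.erase m₀, (∑ x : Fin n → Bool, g n k χ t x m)
      = ∑ m ∈ univ.erase m₀, ∏ i, Fbit n k χ t i (m i) :=
    Finset.sum_congr rfl fun m _ => hh_eq n k χ hχ0 hχ1 t m
  have h3 : (∏ i, Fbit n k χ t i (m₀ i)) + ∑ m ∈ univ.erase m₀, ∏ i, Fbit n k χ t i (m i)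
      = 1 := by
    rw [Finset.add_sum_erase (univ : Finset (Fin n → Bool))
      (fun m => ∏ i, Fbit n k χ t i (m i)) (mem_univ m₀)]
    rw [sum_pi_bool (fun i c => Fbit n k χ t i c)]
    refine Finset.prod_eq_one fun i _ => ?_
    by_cases h : (i:ℕ) < k <;> simp [Fbit, h, ab_one χ hχ0 hχ1 t]
  have h4 : (∏ i, Fbit n k χ t i (m₀ i)) = bbit χ t ^ k := by
    have : ∀ i : Fin n, Fbit n k χ t i (m₀ i) = if (i:ℕ) < k then bbit χ t else 1 := by
      intro i; simp [Fbit, hm₀]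
    rw [Finset.prod_congr rfl fun i _ => this i, ← Finset.prod_filter,
      Finset.prod_const, card_filter_lt n k hkn]
  refine le_trans ?_ (h2 ▸ h1)
  rw [tsub_le_iff_right, ← h4, add_comm]
  exact le_of_eq h3.symm

end EALower

/-- Fixed-target lower bound for the standard (1+1) EA with mutation rate `χ = 1/n`
on BinVal (`n ≥ 2`, `2 ≤ k ≤ n`):
`E[T_k] ≥ (1/2)·(n − 1)·ln k·(1 − e^{−1/2})`, i.e. `E[T_k] = Ω(n log k)`. -/
theorem ea_standard_fixed_target_lower
    (n k : ℕ) (hn : 2 ≤ n) (hk2 : 2 ≤ k) (hkn : k ≤ n) :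
    ENNReal.ofReal ((1 / 2) * ((n : ℝ) - 1) * Real.log k * (1 - Real.exp (-(1 / 2)))) ≤
      hitTimeExp (uniformInit n) (stepKer n (1 / n)) (firstKOnes n k) := by
  classical
  set χ : ℝ := 1 / n with hχ
  have hn0 : (0:ℝ) < n := by positivity
  have hn1 : (1:ℝ) ≤ (n:ℝ) - 1 := by
    have : (2:ℝ) ≤ n := by exact_mod_cast hn
    linarith
  have hχ0 : 0 ≤ χ := by positivity
  have hχ1 : χ ≤ 1 := by
    rw [hχ, div_le_one hn0]
    exact_mod_cast Nat.one_le_of_lt hn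
  have h1χ0 : (0:ℝ) ≤ 1 - χ := by linarith
  have hk1 : (1:ℝ) < k := by exact_mod_cast hk2
  have hL : 0 < Real.log k := Real.log_pos hk1
  set L := Real.log k with hLdef
  set mreal : ℝ := (1/2) * ((n:ℝ) - 1) * L with hmr
  have hm0 : 0 < mreal := by
    apply mul_pos (mul_pos (by norm_num) (by linarith)) hL
  set M : ℕ := ⌈mreal⌉₊ with hM
  have hM1 : 1 ≤ M := Nat.one_le_iff_ne_zero.mpr (by
    simp only [hM, ne_eq, Nat.ceil_eq_zero, not_le]
    exact hm0)
  set t' : ℕ := M - 1 with ht'def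
  have ht'r : (t' : ℝ) ≤ mreal := by
    have h1 : (M:ℝ) < mreal + 1 := Nat.ceil_lt_add_one hm0.le
    have h2 : (t' : ℝ) = (M:ℝ) - 1 := by
      rw [ht'def, Nat.cast_sub hM1, Nat.cast_one]
    linarith
  -- step 1: 1 - χ ≥ exp(-(1/(n-1)))
  have hexp1 : Real.exp (-(1/((n:ℝ)-1))) ≤ 1 - χ := by
    have ha : (0:ℝ) < 1/((n:ℝ)-1) := by positivity
    have h1 : 1/((n:ℝ)-1) + 1 ≤ Real.exp (1/((n:ℝ)-1)) := Real.add_one_le_exp _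
    have h2 : Real.exp (-(1/((n:ℝ)-1))) = (Real.exp (1/((n:ℝ)-1)))⁻¹ := Real.exp_neg _
    rw [h2]
    have h3 : (Real.exp (1/((n:ℝ)-1)))⁻¹ ≤ (1/((n:ℝ)-1) + 1)⁻¹ := by
      apply inv_anti₀ (by linarith) h1
    apply h3.trans
    have h4 : (1/((n:ℝ)-1) + 1)⁻¹ = 1 - χ := by
      rw [hχ]
      have hne : (n:ℝ) - 1 ≠ 0 := by linarith
      have hne2 : (n:ℝ) ≠ 0 := by linarith
      rw [show 1/((n:ℝ)-1) + 1 = n/((n:ℝ)-1) by field_simp; ring,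
        show (1:ℝ) - 1/(n:ℝ) = ((n:ℝ)-1)/(n:ℝ) by field_simp, inv_div]
    rw [h4]
  -- step 2: (1-χ)^t' ≥ exp(-(L/2))
  have hexp2 : Real.exp (-(L/2)) ≤ (1 - χ)^t' := by
    have h1 : (Real.exp (-(1/((n:ℝ)-1))))^t' ≤ (1 - χ)^t' :=
      pow_le_pow_left₀ (Real.exp_nonneg _) hexp1 t'
    refine le_trans ?_ h1
    rw [← Real.exp_nat_mul]
    apply Real.exp_le_exp.mpr
    have hfrac : mreal / ((n:ℝ)-1) = L / 2 := by
      rw [hmr]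
      field_simp
    have : (t':ℝ) * -(1/((n:ℝ)-1)) = -((t':ℝ)/((n:ℝ)-1)) := by ring
    rw [this]
    rw [neg_le_neg_iff]
    rw [← hfrac]
    have hpos : (0:ℝ) < (n:ℝ) - 1 := by linarith
    exact (div_le_div_iff_of_pos_right hpos).mpr ht'r
  set α : ℝ := (1/2) * (1-χ)^t' with hα
  have hα0 : 0 ≤ α := mul_nonneg (by norm_num) (pow_nonneg h1χ0 _)
  have hα1 : α ≤ 1 := by
    have := pow_le_one₀ h1χ0 (by linarith : 1 - χ ≤ 1) (n := t')
    rw [hα]; linarith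
  have hkα : 1/2 ≤ (k:ℝ) * α := by
    have h1 : (k:ℝ) * ((1/2) * Real.exp (-(L/2))) ≤ (k:ℝ) * α := by
      apply mul_le_mul_of_nonneg_left _ (by positivity)
      rw [hα]
      exact mul_le_mul_of_nonneg_left hexp2 (by norm_num)
    refine le_trans ?_ h1
    have hk0 : (0:ℝ) < k := by linarith
    have hkexp : (k:ℝ) = Real.exp L := (Real.exp_log hk0).symm
    rw [hkexp]
    have h5 : Real.exp L * (1/2 * Real.exp (-(L/2))) = 1/2 * Real.exp (L + -(L/2)) := by
      rw [Real.exp_add]; ring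
    rw [h5, show L + -(L/2) = L/2 by ring]
    have := Real.one_le_exp (by linarith : (0:ℝ) ≤ L/2)
    linarith
  have hfinal : (1 - α)^k ≤ Real.exp (-(1/2)) := by
    have h1 : 1 - α ≤ Real.exp (-α) := by
      have := Real.add_one_le_exp (-α)
      linarith
    calc (1 - α)^k ≤ (Real.exp (-α))^k := pow_le_pow_left₀ (by linarith) h1 k
      _ = Real.exp ((k:ℝ) * -α) := by rw [← Real.exp_nat_mul]
      _ ≤ Real.exp (-(1/2)) := Real.exp_le_exp.mpr (by nlinarith)
  -- ENNReal part
  rw [hitTimeExp]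
  have hsum : ∀ t : ℕ, (∑' s : Fin n → Bool,
      alive (uniformInit n) (stepKer n χ) (firstKOnes n k) t s)
      = ∑ s : Fin n → Bool, alive (uniformInit n) (stepKer n χ) (firstKOnes n k) t s :=
    fun t => tsum_fintype _
  calc ENNReal.ofReal ((1 / 2) * ((n : ℝ) - 1) * Real.log k * (1 - Real.exp (-(1 / 2))))
      = ENNReal.ofReal mreal * ENNReal.ofReal (1 - Real.exp (-(1/2))) := by
        rw [← ENNReal.ofReal_mul hm0.le]
    _ ≤ (M : ℝ≥0∞) * (1 - EALower.bbit χ t' ^ k) := by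
        apply mul_le_mul'
        · rw [← ENNReal.ofReal_natCast M]
          exact ENNReal.ofReal_le_ofReal (Nat.le_ceil mreal)
        · have hb : EALower.bbit χ t' ^ k = ENNReal.ofReal ((1-α)^k) := by
            rw [EALower.bbit, ← ENNReal.ofReal_pow (by linarith)]
          rw [hb]
          have h2 : ENNReal.ofReal ((1-α)^k) ≤ ENNReal.ofReal (Real.exp (-(1/2))) :=
            ENNReal.ofReal_le_ofReal hfinal
          have h3 : ENNReal.ofReal (1 - Real.exp (-(1/2)))
              = 1 - ENNReal.ofReal (Real.exp (-(1/2))) := by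
            apply ENNReal.eq_sub_of_add_eq ENNReal.ofReal_ne_top
            have hexple : Real.exp (-(1/2:ℝ)) ≤ 1 := by
              rw [Real.exp_le_one_iff]; norm_num
            rw [← ENNReal.ofReal_add (by linarith) (Real.exp_nonneg _)]
            rw [sub_add_cancel, ENNReal.ofReal_one]
          rw [h3]
          exact tsub_le_tsub_left h2 1
    _ = ∑ t ∈ Finset.range M, (1 - EALower.bbit χ t' ^ k) := by
        rw [Finset.sum_const, Finset.card_range, nsmul_eq_mul]
    _ ≤ ∑ t ∈ Finset.range M, (1 - EALower.bbit χ t ^ k) := by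
        apply Finset.sum_le_sum
        intro t ht
        apply tsub_le_tsub_left
        apply pow_le_pow_left' ?_ k
        rw [EALower.bbit, EALower.bbit]
        apply ENNReal.ofReal_le_ofReal
        have hle : t ≤ t' := by
          rw [ht'def]
          exact Nat.le_sub_one_of_lt (Finset.mem_range.mp ht)
        have := pow_le_pow_of_le_one h1χ0 (by linarith : 1 - χ ≤ 1) hle
        linarith
    _ ≤ ∑ t ∈ Finset.range M, ∑ s : Fin n → Bool,
          alive (uniformInit n) (stepKer n χ) (firstKOnes n k) t s :=
        Finset.sum_le_sum fun t _ => EALower.alive_lb n k χ hχ0 hχ1 hkn t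
    _ ≤ ∑' t : ℕ, ∑' s : Fin n → Bool,
          alive (uniformInit n) (stepKer n χ) (firstKOnes n k) t s := by
        rw [tsum_congr hsum]
        exact ENNReal.sum_le_tsum (Finset.range M)

end
end

section
/- Drift-transfer under logarithmic rescaling: Let g_min ≥ 1 and g ≥ g_min be real numbers, let ζ ≥ 0, and let G' be an integrable real-valued random variable with G' ≥ 0 almost surely and E[g − G'] ≥ ζ·g. Then E[ln(1 + g/g_min) − ln(1 + G'/g_min)] ≥ ζ/2. (In particular, a multiplicative drift of factor ζ for a potential g that stays above g_min translates into an additive drift of at least ζ/2 for the rescaled potential h₁ = ln(1 + g/g_min).) -/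
open MeasureTheory

lemma log_diff_ge_aux (a b : ℝ) (ha : 0 ≤ a) (hb : 0 ≤ b) :
    (a - b) / (1 + a) ≤ Real.log (1 + a) - Real.log (1 + b) := by
  have h1a : (0:ℝ) < 1 + a := by linarith
  have h1b : (0:ℝ) < 1 + b := by linarith
  have hx : 0 < (1 + b) / (1 + a) := by positivity
  have h := Real.log_le_sub_one_of_pos hx
  rw [Real.log_div (by linarith) (by linarith)] at h
  have heq : (1 + b) / (1 + a) - 1 = (b - a) / (1 + a) := by field_simp; ring
  rw [heq] at h
  have : (a - b) / (1 + a) = -((b - a) / (1 + a)) := by ring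
  linarith [this ▸ (neg_le_neg h)]

/-- **Drift transfer under logarithmic rescaling.**
If `g_min ≥ 1`, `g ≥ g_min`, `ζ ≥ 0`, and `G'` is an integrable nonnegative random
variable with `E[g − G'] ≥ ζ·g`, then
`E[ln(1 + g/g_min) − ln(1 + G'/g_min)] ≥ ζ/2`. -/
theorem drift_transfer_log_rescaling
    {Ω : Type*} [MeasurableSpace Ω] (μ : Measure Ω) [IsProbabilityMeasure μ]
    (gmin g ζ : ℝ) (hgmin : 1 ≤ gmin) (hg : gmin ≤ g) (hζ : 0 ≤ ζ)
    (G' : Ω → ℝ) (hint : Integrable G' μ) (hpos : ∀ᵐ ω ∂μ, 0 ≤ G' ω)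
    (hdrift : ζ * g ≤ ∫ ω, (g - G' ω) ∂μ) :
    ζ / 2 ≤ ∫ ω, (Real.log (1 + g / gmin) - Real.log (1 + G' ω / gmin)) ∂μ := by
  have hgmin0 : (0:ℝ) < gmin := by linarith
  have hg0 : (0:ℝ) < g := by linarith
  have hsum : (0:ℝ) < gmin + g := by linarith
  -- measurability of the log term
  have hmeas : AEStronglyMeasurable (fun ω => Real.log (1 + G' ω / gmin)) μ :=
    (Real.measurable_log.comp_aemeasurable
      ((hint.aemeasurable.div_const gmin).const_add 1)).aestronglyMeasurable
  -- integrability of the log term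
  have hintlog : Integrable (fun ω => Real.log (1 + G' ω / gmin)) μ := by
    refine Integrable.mono' (hint.div_const gmin) hmeas ?_
    filter_upwards [hpos] with ω hω
    have hx : 0 ≤ G' ω / gmin := div_nonneg hω hgmin0.le
    have h1 : 0 ≤ Real.log (1 + G' ω / gmin) := Real.log_nonneg (by linarith)
    have h2 : Real.log (1 + G' ω / gmin) ≤ G' ω / gmin := by
      have := Real.log_le_sub_one_of_pos (show (0:ℝ) < 1 + G' ω / gmin by linarith)
      linarith
    rw [Real.norm_eq_abs, abs_of_nonneg h1]
    exact h2
  have hintf : Integrable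
      (fun ω => Real.log (1 + g / gmin) - Real.log (1 + G' ω / gmin)) μ :=
    (integrable_const _).sub hintlog
  -- pointwise bound
  have hae : ∀ᵐ ω ∂μ, (g - G' ω) / (gmin + g) ≤
      Real.log (1 + g / gmin) - Real.log (1 + G' ω / gmin) := by
    filter_upwards [hpos] with ω hω
    have key := log_diff_ge_aux (g / gmin) (G' ω / gmin)
      (div_nonneg hg0.le hgmin0.le) (div_nonneg hω hgmin0.le)
    have heq : (g / gmin - G' ω / gmin) / (1 + g / gmin) = (g - G' ω) / (gmin + g) := by
      field_simp
    rwa [heq] at key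
  -- the comparison integral
  have hint2 : Integrable (fun ω => (g - G' ω) / (gmin + g)) μ :=
    ((integrable_const g).sub hint).div_const _
  have hmono : ∫ ω, (g - G' ω) / (gmin + g) ∂μ ≤
      ∫ ω, (Real.log (1 + g / gmin) - Real.log (1 + G' ω / gmin)) ∂μ :=
    integral_mono_ae hint2 hintf hae
  have hcalc : ∫ ω, (g - G' ω) / (gmin + g) ∂μ = (∫ ω, (g - G' ω) ∂μ) / (gmin + g) :=
    integral_div _ _
  have hstep : ζ * g / (gmin + g) ≤ (∫ ω, (g - G' ω) ∂μ) / (gmin + g) :=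
    by gcongr
  have hfinal : ζ / 2 ≤ ζ * g / (gmin + g) := by
    rw [div_le_div_iff₀ (by norm_num) hsum]
    nlinarith
  calc ζ / 2 ≤ ζ * g / (gmin + g) := hfinal
    _ ≤ (∫ ω, (g - G' ω) ∂μ) / (gmin + g) := hstep
    _ = ∫ ω, (g - G' ω) / (gmin + g) ∂μ := hcalc.symm
    _ ≤ _ := hmono
end
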